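/- arXiv:0910.4197 — 3 statements merged into one kernel-verified Lean document; each statement's English description precedes it below -/
import Mathlib

section
/- Let H=(V,E) be a balanced hypergraph. Then ⋎_V(H) = ⋎_V(H∖v) for every v ∈ D_H. -/
open Finset

/-- A hypergraph: a finite vertex set `V` and a finite collection `E` of nonempty
subsets of `V` whose union is `V`. -/
structure FinHypergraph (α : Type*) [DecidableEq α] where
  V : Finset α
  E : Finset (Finset α)
  edge_nonempty : ∀ e ∈ E, e.Nonempty
  edge_subset : ∀ e ∈ E, e ⊆ V
  vertex_mem : ∀ v ∈ V, ∃ e ∈ E, v ∈ e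

namespace FinHypergraph

variable {α : Type*} [DecidableEq α]

/-- A cycle of length `l`: a sequence `v 0, e 1, v 1, e 2, …, e l, v l` with
`v (i-1), v i ∈ e i`, the vertices `v 0, …, v (l-1)` pairwise distinct and `v l = v 0`. -/
def IsCycle (H : FinHypergraph α) (l : ℕ) (v : ℕ → α) (e : ℕ → Finset α) : Prop :=
  2 ≤ l ∧ (∀ i, 1 ≤ i → i ≤ l → e i ∈ H.E ∧ v (i - 1) ∈ e i ∧ v i ∈ e i) ∧
    (∀ i j, i < l → j < l → v i = v j → i = j) ∧ v l = v 0

/-- A strong cycle: no edge of the cycle contains three vertices of the cycle. -/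
def IsStrongCycle (H : FinHypergraph α) (l : ℕ) (v : ℕ → α) (e : ℕ → Finset α) : Prop :=
  H.IsCycle l v e ∧ ∀ i, 1 ≤ i → i ≤ l → (e i ∩ (Finset.range l).image v).card ≤ 2

/-- A hypergraph is balanced if it has no strong cycle of odd length. -/
def Balanced (H : FinHypergraph α) : Prop :=
  ¬ ∃ (l : ℕ) (v : ℕ → α) (e : ℕ → Finset α), H.IsStrongCycle l v e ∧ Odd l

/-- A matching: a set of pairwise disjoint edges. -/
def IsMatching (H : FinHypergraph α) (M : Finset (Finset α)) : Prop :=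
  M ⊆ H.E ∧ ∀ e ∈ M, ∀ f ∈ M, e ≠ f → Disjoint e f

/-- The `d`-matching number `⋎_d(H)`: the maximum of `∑ m ∈ M, d m` over matchings `M`. -/
noncomputable def nuW (H : FinHypergraph α) (d : Finset α → ℕ) : ℕ :=
  sSup ((fun M => ∑ m ∈ M, d m) '' {M | H.IsMatching M})

/-- The matching number `⋎_E(H)`: the maximum number of edges of a matching. -/
noncomputable def nuE (H : FinHypergraph α) : ℕ :=
  sSup ((fun M : Finset (Finset α) => M.card) '' {M | H.IsMatching M})

/-- The matching number `⋎_V(H)`: the maximum number of vertices covered by a matching. -/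
noncomputable def nuV (H : FinHypergraph α) : ℕ :=
  sSup ((fun M : Finset (Finset α) => ∑ m ∈ M, m.card) '' {M | H.IsMatching M})

/-- A `d`-vertex cover: `x : α → ℕ` with `∑_{u ∈ e} x u ≥ d e` for every edge `e`. -/
def IsCover (H : FinHypergraph α) (d : Finset α → ℕ) (x : α → ℕ) : Prop :=
  ∀ e ∈ H.E, d e ≤ ∑ u ∈ e, x u

/-- The `d`-vertex cover number `τ_d(H)`. -/
noncomputable def tauW (H : FinHypergraph α) (d : Finset α → ℕ) : ℕ :=
  sInf ((fun x : α → ℕ => ∑ u ∈ H.V, x u) '' {x | H.IsCover d x})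

/-- An `E`-vertex cover: every edge gets total weight at least `1`. -/
def IsECover (H : FinHypergraph α) (x : α → ℕ) : Prop :=
  H.IsCover (fun _ => 1) x

/-- A `V`-vertex cover: every edge `e` gets total weight at least `|e|`. -/
def IsVCover (H : FinHypergraph α) (x : α → ℕ) : Prop :=
  H.IsCover (fun e => e.card) x

/-- The `E`-vertex cover number `τ_E(H)`. -/
noncomputable def tauE (H : FinHypergraph α) : ℕ := H.tauW (fun _ => 1)

/-- The `V`-vertex cover number `τ_V(H)`. -/
noncomputable def tauV (H : FinHypergraph α) : ℕ := H.tauW (fun e => e.card)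

/-- A `V`-maximum matching: maximizes the number of covered vertices. -/
def IsMaxVMatching (H : FinHypergraph α) (M : Finset (Finset α)) : Prop :=
  H.IsMatching M ∧ ∀ M', H.IsMatching M' → ∑ m ∈ M', m.card ≤ ∑ m ∈ M, m.card

/-- An `E`-maximum matching: maximizes the number of edges. -/
def IsMaxEMatching (H : FinHypergraph α) (M : Finset (Finset α)) : Prop :=
  H.IsMatching M ∧ ∀ M', H.IsMatching M' → M'.card ≤ M.card

/-- A minimum `V`-vertex cover. -/
def IsMinVCover (H : FinHypergraph α) (x : α → ℕ) : Prop :=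
  H.IsVCover x ∧ ∀ y, H.IsVCover y → ∑ u ∈ H.V, x u ≤ ∑ u ∈ H.V, y u

/-- A minimum `E`-vertex cover. -/
def IsMinECover (H : FinHypergraph α) (x : α → ℕ) : Prop :=
  H.IsECover x ∧ ∀ y, H.IsECover y → ∑ u ∈ H.V, x u ≤ ∑ u ∈ H.V, y u

/-- The hypergraph `H ∖ v = (V ∖ {v}, {e ∖ {v} : e ∈ E, e ∖ {v} ≠ ∅})`. -/
def delV (H : FinHypergraph α) (v : α) : FinHypergraph α where
  V := H.V.erase v
  E := (H.E.image fun e => e.erase v).filter fun e => e.Nonempty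
  edge_nonempty := fun e he => (Finset.mem_filter.mp he).2
  edge_subset := by
    intro e he
    obtain ⟨f, hf, rfl⟩ := Finset.mem_image.mp (Finset.mem_filter.mp he).1
    exact Finset.erase_subset_erase v (H.edge_subset f hf)
  vertex_mem := by
    intro u hu
    obtain ⟨hne, huV⟩ := Finset.mem_erase.mp hu
    obtain ⟨e, he, hue⟩ := H.vertex_mem u huV
    exact ⟨e.erase v,
      Finset.mem_filter.mpr ⟨Finset.mem_image_of_mem _ he,
        ⟨u, Finset.mem_erase.mpr ⟨hne, hue⟩⟩⟩,
      Finset.mem_erase.mpr ⟨hne, hue⟩⟩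

/-- `D_H`: vertices not covered by at least one `V`-maximum matching. -/
def setD (H : FinHypergraph α) : Set α :=
  {v | v ∈ H.V ∧ ∃ M, H.IsMaxVMatching M ∧ ∀ m ∈ M, v ∉ m}

/-- `P_H`: vertices having weight at least `2` in every minimum `V`-vertex cover. -/
def setP (H : FinHypergraph α) : Set α :=
  {v | v ∈ H.V ∧ ∀ x, H.IsMinVCover x → 2 ≤ x v}

/-- `M_H = V ∖ (D_H ∪ P_H)`. -/
def setM (H : FinHypergraph α) : Set α :=
  {v | v ∈ H.V ∧ v ∉ H.setD ∧ v ∉ H.setP}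

/-- `A_H`: vertices outside `D_H` lying in a common edge with some vertex of `D_H`. -/
def setA (H : FinHypergraph α) : Set α :=
  {v | v ∈ H.V ∧ v ∉ H.setD ∧ ∃ e ∈ H.E, v ∈ e ∧ ∃ u ∈ H.setD, u ∈ e}

/-- `C_H = V ∖ (A_H ∪ D_H)`. -/
def setC (H : FinHypergraph α) : Set α :=
  {v | v ∈ H.V ∧ v ∉ H.setA ∧ v ∉ H.setD}

/-- `F_H`: vertices not covered by at least one `E`-maximum matching. -/
def setF (H : FinHypergraph α) : Set α :=
  {v | v ∈ H.V ∧ ∃ M, H.IsMaxEMatching M ∧ ∀ m ∈ M, v ∉ m}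

/-- `Q_H`: vertices having weight exactly `1` in every minimum `E`-vertex cover. -/
def setQ (H : FinHypergraph α) : Set α :=
  {v | v ∈ H.V ∧ ∀ x, H.IsMinECover x → x v = 1}

/-- `N_H = V ∖ (Q_H ∪ F_H)`. -/
def setN (H : FinHypergraph α) : Set α :=
  {v | v ∈ H.V ∧ v ∉ H.setQ ∧ v ∉ H.setF}

/-- Degree of a vertex. -/
def degree (H : FinHypergraph α) (v : α) : ℕ := (H.E.filter fun e => v ∈ e).card

/-- Maximum degree `Δ(H)`. -/
def maxDegree (H : FinHypergraph α) : ℕ := H.V.sup H.degree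

/-- Factor critical: `H ∖ v` has a perfect matching for every vertex `v`. -/
def FactorCritical (H : FinHypergraph α) : Prop :=
  ∀ v ∈ H.V, ∃ M, (H.delV v).IsMatching M ∧ ∀ u ∈ (H.delV v).V, ∃ m ∈ M, u ∈ m

/-- A stable set: no subset of size at least two is contained in an edge. -/
def IsStable (H : FinHypergraph α) (S : Finset α) : Prop :=
  S ⊆ H.V ∧ ∀ T ⊆ S, 2 ≤ T.card → ∀ e ∈ H.E, ¬ T ⊆ e

/-- A maximum weight stable set with regard to the weight function `d`. -/
def IsMaxWeightStable (H : FinHypergraph α) (d : α → ℕ) (S : Finset α) : Prop :=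
  H.IsStable S ∧ ∀ T, H.IsStable T → ∑ u ∈ T, d u ≤ ∑ u ∈ S, d u

/-- `K` is the subhypergraph of `H` induced by some vertex set `W`. -/
def IsSubhypergraph (H K : FinHypergraph α) : Prop :=
  ∃ W : Finset α, W ⊆ H.V ∧ K.V = W ∧
    K.E = (H.E.image fun e => e ∩ W).filter fun e => e.Nonempty

/-- `K` is a partial hypergraph of `H`: generated by a subset of the edges of `H`. -/
def IsPartialHypergraph (H K : FinHypergraph α) : Prop := K.E ⊆ H.E

/-- `K` is a partial subhypergraph of `H`: a partial hypergraph of a subhypergraph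
of `H`, or a subhypergraph of a partial hypergraph of `H`. -/
def IsPartialSubhypergraph (H K : FinHypergraph α) : Prop :=
  (∃ G : FinHypergraph α, H.IsSubhypergraph G ∧ G.IsPartialHypergraph K) ∨
  (∃ G : FinHypergraph α, H.IsPartialHypergraph G ∧ G.IsSubhypergraph K)

end FinHypergraph

namespace HGAux

open Finset FinHypergraph

variable {α : Type*} [DecidableEq α]

/-- The set of matching values is nonempty. -/
lemma val_set_nonempty (H : FinHypergraph α) :
    ((fun M : Finset (Finset α) => ∑ m ∈ M, m.card) '' {M | H.IsMatching M}).Nonempty := by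
  refine ⟨0, ∅, ?_, by simp⟩
  constructor
  · exact Finset.empty_subset _
  · intro e he; simp at he

lemma val_set_bddAbove (H : FinHypergraph α) :
    BddAbove ((fun M : Finset (Finset α) => ∑ m ∈ M, m.card) '' {M | H.IsMatching M}) := by
  refine ⟨∑ e ∈ H.E, e.card, ?_⟩
  rintro x ⟨M, hM, rfl⟩
  exact Finset.sum_le_sum_of_subset hM.1

lemma val_le_nuV (H : FinHypergraph α) {M : Finset (Finset α)} (hM : H.IsMatching M) :
    ∑ m ∈ M, m.card ≤ H.nuV :=
  le_csSup (val_set_bddAbove H) ⟨M, hM, rfl⟩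

lemma nuV_le (H : FinHypergraph α) {n : ℕ}
    (h : ∀ M : Finset (Finset α), H.IsMatching M → ∑ m ∈ M, m.card ≤ n) : H.nuV ≤ n := by
  refine csSup_le (val_set_nonempty H) ?_
  rintro x ⟨M, hM, rfl⟩
  exact h M hM

lemma nuV_eq_val_of_max {H : FinHypergraph α} {M : Finset (Finset α)}
    (hM : H.IsMaxVMatching M) : H.nuV = ∑ m ∈ M, m.card :=
  le_antisymm (nuV_le H fun M' hM' => hM.2 M' hM') (val_le_nuV H hM.1)

/-- A matching of `H` that avoids `v` is a matching of `H ∖ v`. -/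
lemma matching_delV_of_avoid {H : FinHypergraph α} {M : Finset (Finset α)} {v : α}
    (hM : H.IsMatching M) (hv : ∀ m ∈ M, v ∉ m) : (H.delV v).IsMatching M := by
  constructor
  · intro m hm
    refine Finset.mem_filter.mpr ⟨?_, H.edge_nonempty m (hM.1 hm)⟩
    exact Finset.mem_image.mpr ⟨m, hM.1 hm, Finset.erase_eq_of_notMem (hv m hm)⟩
  · exact hM.2

end HGAux
namespace HGAux

open Finset

variable {α : Type*} [DecidableEq α]

open scoped Classical in
/-- Generic component-wise summation lemma: if for every element `f` of `F` the sum of `w`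
over the `r`-component of `f` is at most the sum of `u` over it, then `∑ w ≤ ∑ u` on `F`. -/
lemma comp_sum {β : Type*} [DecidableEq β] (w u : β → ℕ) (r : β → β → Prop)
    (hsym : ∀ a b, r a b → r b a) (htrans : ∀ a b c, r a b → r b c → r a c) :
    ∀ (n : ℕ) (F : Finset β), F.card = n → (∀ a ∈ F, r a a) →
    (∀ f ∈ F, ∑ b ∈ F.filter (fun b => r f b), w b ≤ ∑ b ∈ F.filter (fun b => r f b), u b) →
    ∑ b ∈ F, w b ≤ ∑ b ∈ F, u b := by
  intro n
  induction n using Nat.strong_induction_on with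
  | _ n ih =>
    intro F hcard hrefl key
    rcases F.eq_empty_or_nonempty with rfl | ⟨f₀, hf₀⟩
    · simp
    · set K : Finset β := F.filter (fun b => r f₀ b) with hK
      have hKF : K ⊆ F := Finset.filter_subset _ _
      have hf₀K : f₀ ∈ K := Finset.mem_filter.mpr ⟨hf₀, hrefl f₀ hf₀⟩
      set F' : Finset β := F \ K with hF'
      have hcard' : F'.card < n := by
        rw [← hcard]
        apply Finset.card_lt_card
        refine ⟨Finset.sdiff_subset, fun hsub => ?_⟩
        exact (Finset.mem_sdiff.mp (hsub hf₀)).2 hf₀K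
      -- components inside F' agree with components inside F
      have hsame : ∀ f ∈ F', F'.filter (fun b => r f b) = F.filter (fun b => r f b) := by
        intro f hf
        apply Finset.ext
        intro b
        simp only [hF', Finset.mem_filter, Finset.mem_sdiff]
        constructor
        · rintro ⟨⟨hbF, _⟩, hrb⟩; exact ⟨hbF, hrb⟩
        · rintro ⟨hbF, hrb⟩
          refine ⟨⟨hbF, fun hbK => ?_⟩, hrb⟩
          have hfK : r f₀ f := htrans _ _ _ ((Finset.mem_filter.mp hbK).2) (hsym _ _ hrb)
          exact (Finset.mem_sdiff.mp hf).2 (Finset.mem_filter.mpr ⟨(Finset.mem_sdiff.mp hf).1, hfK⟩)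
      have hIH : ∑ b ∈ F', w b ≤ ∑ b ∈ F', u b := by
        refine ih _ hcard' F' rfl (fun a ha => hrefl a (Finset.mem_sdiff.mp ha).1) ?_
        intro f hf
        rw [hsame f hf]
        exact key f (Finset.mem_sdiff.mp hf).1
      have hsplit : ∀ g : β → ℕ, ∑ b ∈ F, g b = ∑ b ∈ K, g b + ∑ b ∈ F', g b := by
        intro g
        rw [hF', ← Finset.sum_union (Finset.disjoint_sdiff), Finset.union_sdiff_of_subset hKF]
      rw [hsplit w, hsplit u]
      exact Nat.add_le_add (key f₀ hf₀) hIH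

end HGAux
namespace HGAux

open Finset

variable {α : Type*} [DecidableEq α]

/-- Adjacency between members of `F`: they intersect outside `v`. -/
def Adj (v : α) (F : Finset (Finset α)) (a b : Finset α) : Prop :=
  a ∈ F ∧ b ∈ F ∧ ((a ∩ b).erase v).Nonempty

/-- Connectivity. -/
def Conn (v : α) (F : Finset (Finset α)) : Finset α → Finset α → Prop :=
  Relation.ReflTransGen (Adj v F)

lemma adj_symm (v : α) (F : Finset (Finset α)) : Symmetric (Adj v F) := by
  rintro a b ⟨ha, hb, hne⟩
  exact ⟨hb, ha, by rwa [Finset.inter_comm]⟩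

lemma conn_symm (v : α) (F : Finset (Finset α)) : Symmetric (Conn v F) :=
  by
  intro a b h
  induction h with
  | refl => exact Relation.ReflTransGen.refl
  | tail _ hbc ih => exact Relation.ReflTransGen.head (adj_symm v F hbc) ih

lemma conn_trans (v : α) (F : Finset (Finset α)) {a b c : Finset α}
    (h1 : Conn v F a b) (h2 : Conn v F b c) : Conn v F a c :=
  Relation.ReflTransGen.trans h1 h2

/-- Extract an indexed chain from connectivity. -/
lemma conn_chain {v : α} {F : Finset (Finset α)} {s s' : Finset α} (h : Conn v F s s') :
    ∃ (n : ℕ) (p : ℕ → Finset α), p 0 = s ∧ p n = s' ∧ ∀ i < n, Adj v F (p i) (p (i + 1)) := by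
  induction h with
  | refl => exact ⟨0, fun _ => s, rfl, rfl, fun i hi => absurd hi (Nat.not_lt_zero i)⟩
  | tail hab hbc ih =>
    obtain ⟨n, p, hp0, hpn, hstep⟩ := ih
    rename_i c'
    refine ⟨n + 1, fun i => if i ≤ n then p i else c', by simpa, by simp, ?_⟩
    intro i hi
    rcases Nat.lt_or_ge i n with hin | hin
    · simpa [Nat.le_of_lt hin, Nat.succ_le_of_lt hin] using hstep i hin
    · have : i = n := by omega
      subst this
      simpa [hpn] using hbc

end HGAux
namespace HGAux

open Finset

variable {α : Type*} [DecidableEq α]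

/-- The heart: in a balanced hypergraph, two distinct `v`-edges of `L₁` cannot be connected
through the bipartite-like structure `M₁ ∪ L₁`. -/
lemma no_two_conn (H : FinHypergraph α) (hH : H.Balanced) (v : α) (M₁ L₁ : Finset (Finset α))
    (hM₁E : M₁ ⊆ H.E) (hL₁E : L₁ ⊆ H.E)
    (hM₁dis : ∀ a ∈ M₁, ∀ b ∈ M₁, a ≠ b → Disjoint a b)
    (hM₁v : ∀ m ∈ M₁, v ∉ m)
    (hL₁ : ∀ a ∈ L₁, ∀ b ∈ L₁, a ≠ b → a ∩ b ⊆ {v})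
    (hML : Disjoint M₁ L₁)
    {s s' : Finset α} (hs : s ∈ L₁) (hs' : s' ∈ L₁) (hvs : v ∈ s) (hvs' : v ∈ s')
    (hne : s ≠ s') (hconn : Conn v (M₁ ∪ L₁) s s') : False := by
  classical
  set F : Finset (Finset α) := M₁ ∪ L₁ with hF
  -- no adjacency between two distinct edges of the same side
  have hadjL : ∀ a ∈ L₁, ∀ b ∈ L₁, a ≠ b → ¬ Adj v F a b := by
    rintro a ha b hb hab ⟨-, -, ⟨y, hy⟩⟩
    rcases Finset.mem_erase.mp hy with ⟨hyv, hyi⟩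
    exact hyv (Finset.mem_singleton.mp (hL₁ a ha b hb hab hyi))
  have hadjM : ∀ a ∈ M₁, ∀ b ∈ M₁, a ≠ b → ¬ Adj v F a b := by
    rintro a ha b hb hab ⟨-, -, ⟨y, hy⟩⟩
    rcases Finset.mem_erase.mp hy with ⟨-, hyi⟩
    rcases Finset.mem_inter.mp hyi with ⟨h1, h2⟩
    exact Finset.disjoint_left.mp (hM₁dis a ha b hb hab) h1 h2
  -- minimal chains between distinct v-edges of L₁
  set Ch : ℕ → Prop := fun n => ∃ p : ℕ → Finset α, p 0 ∈ L₁ ∧ v ∈ p 0 ∧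
      p n ∈ L₁ ∧ v ∈ p n ∧ p 0 ≠ p n ∧ ∀ i < n, Adj v F (p i) (p (i + 1)) with hCh
  have hex : ∃ n, Ch n := by
    obtain ⟨n, p, hp0, hpn, hstep⟩ := conn_chain hconn
    exact ⟨n, p, by rw [hp0]; exact hs, by rw [hp0]; exact hvs,
      by rw [hpn]; exact hs', by rw [hpn]; exact hvs', by rw [hp0, hpn]; exact hne, hstep⟩
  set n₀ : ℕ := sInf {n | Ch n} with hn₀def
  obtain ⟨p, hp0L, hp0v, hpnL, hpnv, hpne, hadj⟩ : Ch n₀ := Nat.sInf_mem hex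
  have hmin : ∀ m, m < n₀ → ¬ Ch m := fun m hm => Nat.notMem_of_lt_sInf hm
  -- n₀ ≥ 2
  have hn₀1 : 1 ≤ n₀ := by
    by_contra h
    have h0 : n₀ = 0 := by omega
    rw [h0] at hpne
    exact hpne rfl
  have hn₀2 : 2 ≤ n₀ := by
    by_contra h
    have h1 : n₀ = 1 := by omega
    rw [h1] at hadj hpnL hpne
    exact hadjL _ hp0L _ hpnL hpne (hadj 0 Nat.one_pos)
  -- membership of all chain nodes
  have hmem : ∀ a, a ≤ n₀ → p a ∈ F := by
    intro a ha
    rcases Nat.lt_or_ge a n₀ with h | h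
    · exact (hadj a h).1
    · have hae : a = n₀ := le_antisymm ha h
      have := hadj (n₀ - 1) (by omega)
      rw [Nat.sub_add_cancel hn₀1] at this
      rw [hae]; exact this.2.1
  -- (G1) no shortcuts
  have hgap : ∀ a b, a + 2 ≤ b → b ≤ n₀ → ¬ Adj v F (p a) (p b) := by
    intro a b hab hb hAdj
    apply hmin (n₀ - (b - a - 1)) (by omega)
    refine ⟨fun i => if i ≤ a then p i else p (i + (b - a - 1)), by simpa using hp0L,
      by simpa using hp0v, ?_, ?_, ?_, ?_⟩
    · have h1 : ¬ (n₀ - (b - a - 1) ≤ a) := by omega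
      have h2 : n₀ - (b - a - 1) + (b - a - 1) = n₀ := by omega
      simpa [h1, h2] using hpnL
    · have h1 : ¬ (n₀ - (b - a - 1) ≤ a) := by omega
      have h2 : n₀ - (b - a - 1) + (b - a - 1) = n₀ := by omega
      simpa [h1, h2] using hpnv
    · have h1 : ¬ (n₀ - (b - a - 1) ≤ a) := by omega
      have h2 : n₀ - (b - a - 1) + (b - a - 1) = n₀ := by omega
      simpa [h1, h2] using hpne
    · intro i hi
      rcases Nat.lt_or_ge i a with hia | hia
      · simpa [Nat.le_of_lt hia, Nat.succ_le_of_lt hia] using hadj i (by omega)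
      rcases Nat.eq_or_lt_of_le hia with hia' | hia'
      · have h2 : a + 1 + (b - a - 1) = b := by omega
        simpa [← hia', h2] using hAdj
      · have h1 : ¬ (i ≤ a) := by omega
        have h2 : ¬ (i + 1 ≤ a) := by omega
        have h3 : i + 1 + (b - a - 1) = i + (b - a - 1) + 1 := by omega
        simpa [h1, h2, h3] using hadj (i + (b - a - 1)) (by omega)
  -- (G2) inner nodes are not v-edges of L₁
  have hinner : ∀ a, 1 ≤ a → a < n₀ → ¬ (p a ∈ L₁ ∧ v ∈ p a) := by
    rintro a h1 h2 ⟨haL, hav⟩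
    by_cases hpa : p a = p 0
    · apply hmin (n₀ - a) (by omega)
      refine ⟨fun i => p (i + a), by simpa using haL, by simpa using hav, ?_, ?_, ?_, ?_⟩
      · have h3 : n₀ - a + a = n₀ := by omega
        simpa [h3] using hpnL
      · have h3 : n₀ - a + a = n₀ := by omega
        simpa [h3] using hpnv
      · have h3 : n₀ - a + a = n₀ := by omega
        simp only [Nat.zero_add, h3]
        rw [hpa]; exact hpne
      · intro i hi
        have h3 : i + a + 1 = i + 1 + a := by omega
        simpa [h3] using hadj (i + a) (by omega)
    · apply hmin a h2
      exact ⟨p, hp0L, hp0v, haL, hav, fun h => hpa h.symm, fun i hi => hadj i (by omega)⟩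
  -- (G3) consecutive nodes distinct
  have hconsec : ∀ a, a < n₀ → p a ≠ p (a + 1) := by
    intro a ha heq
    by_cases hlast : a + 1 = n₀
    · refine hinner a (by omega) ha ⟨?_, ?_⟩
      · rw [heq, hlast]; exact hpnL
      · rw [heq, hlast]; exact hpnv
    · apply hmin (n₀ - 1) (by omega)
      refine ⟨fun i => if i ≤ a then p i else p (i + 1), by simpa using hp0L,
        by simpa using hp0v, ?_, ?_, ?_, ?_⟩
      · have h1 : ¬ (n₀ - 1 ≤ a) := by omega
        have h2 : n₀ - 1 + 1 = n₀ := by omega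
        simpa [h1, h2] using hpnL
      · have h1 : ¬ (n₀ - 1 ≤ a) := by omega
        have h2 : n₀ - 1 + 1 = n₀ := by omega
        simpa [h1, h2] using hpnv
      · have h1 : ¬ (n₀ - 1 ≤ a) := by omega
        have h2 : n₀ - 1 + 1 = n₀ := by omega
        simpa [h1, h2] using hpne
      · intro i hi
        rcases Nat.lt_or_ge i a with hia | hia
        · simpa [Nat.le_of_lt hia, Nat.succ_le_of_lt hia] using hadj i (by omega)
        rcases Nat.eq_or_lt_of_le hia with rfl | hia'
        · have h2 : ¬ (a + 1 ≤ a) := by omega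
          have h3 := hadj (a + 1) (by omega)
          simp only [le_refl, if_pos, h2, if_neg, not_false_iff]
          rw [heq]
          exact h3
        · have h1 : ¬ (i ≤ a) := by omega
          have h2 : ¬ (i + 1 ≤ a) := by omega
          simpa [h1, h2] using hadj (i + 1) (by omega)
  -- (G5) alternation
  have halt : ∀ a, a ≤ n₀ → (p a ∈ L₁ ↔ Even a) := by
    intro a
    induction a with
    | zero => intro _; simpa using hp0L
    | succ k ihk =>
      intro hk
      have hkn : k < n₀ := by omega
      have ihk' := ihk (Nat.le_of_lt hkn)
      have hAdj := hadj k hkn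
      have hne' := hconsec k hkn
      have hk1F : p (k + 1) ∈ F := hmem (k + 1) hk
      by_cases hkL : p k ∈ L₁
      · have h1 : p (k + 1) ∉ L₁ := fun hc => hadjL _ hkL _ hc hne' hAdj
        have h2 : ¬ Even (k + 1) := by
          rw [Nat.even_add_one]; exact not_not_intro (ihk'.mp hkL)
        simp [h1, h2]
      · have hkM : p k ∈ M₁ := (Finset.mem_union.mp (hmem k (Nat.le_of_lt hkn))).resolve_right hkL
        have h1 : p (k + 1) ∉ M₁ := fun hc => hadjM _ hkM _ hc hne' hAdj
        have h2 : p (k + 1) ∈ L₁ := (Finset.mem_union.mp hk1F).resolve_left h1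
        have h3 : Even (k + 1) := by
          rw [Nat.even_add_one]
          exact fun he => hkL (ihk'.mpr he)
        simp [h2, h3]
  have hEven : Even n₀ := (halt n₀ le_rfl).mp hpnL
  -- choose intersection witnesses
  have hxex : ∀ a, a < n₀ → ((p a ∩ p (a + 1)).erase v).Nonempty := fun a ha => (hadj a ha).2.2
  set x : ℕ → α := fun a => if h : a < n₀ then (hxex a h).choose else v with hxdef
  have hx : ∀ a, a < n₀ → x a ≠ v ∧ x a ∈ p a ∧ x a ∈ p (a + 1) := by
    intro a ha
    have hspec := (hxex a ha).choose_spec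
    rw [Finset.mem_erase, Finset.mem_inter] at hspec
    have hxa : x a = (hxex a ha).choose := by simp [hxdef, ha]
    rw [hxa]
    exact ⟨hspec.1, hspec.2.1, hspec.2.2⟩
  -- locality: x a lies only on p a and p (a+1)
  have hloc : ∀ a b, a < n₀ → b ≤ n₀ → x a ∈ p b → b = a ∨ b = a + 1 := by
    intro a b ha hb hxb
    by_contra hcon
    push_neg at hcon
    obtain ⟨hb1, hb2⟩ := hcon
    obtain ⟨hxv, hxa, hxa1⟩ := hx a ha
    rcases Nat.lt_or_ge b a with hba | hba
    · -- b + 2 ≤ a + 1 : Adj (p b) (p (a+1))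
      refine hgap b (a + 1) (by omega) (by omega) ⟨hmem b hb, hmem (a+1) (by omega), ⟨x a, ?_⟩⟩
      exact Finset.mem_erase.mpr ⟨hxv, Finset.mem_inter.mpr ⟨hxb, hxa1⟩⟩
    · -- b ≥ a, b ≠ a, b ≠ a+1 so b ≥ a + 2 : Adj (p a) (p b)
      refine hgap a b (by omega) hb ⟨hmem a (by omega), hmem b hb, ⟨x a, ?_⟩⟩
      exact Finset.mem_erase.mpr ⟨hxv, Finset.mem_inter.mpr ⟨hxa, hxb⟩⟩
  -- injectivity of the x's
  have hxinj : ∀ a b, a < b → b < n₀ → x a ≠ x b := by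
    intro a b hab hb heq
    have hxb := (hx b hb).2.2
    rw [← heq] at hxb
    rcases hloc a (b + 1) (by omega) (by omega) hxb with h | h <;> omega
  -- v only on endpoints
  have hvloc : ∀ b, b ≤ n₀ → v ∈ p b → b = 0 ∨ b = n₀ := by
    intro b hb hvb
    by_contra hcon
    push_neg at hcon
    obtain ⟨hb1, hb2⟩ := hcon
    rcases Finset.mem_union.mp (hmem b hb) with hbM | hbL
    · exact hM₁v _ hbM hvb
    · exact hinner b (by omega) (by omega) ⟨hbL, hvb⟩
  -- build the odd strong cycle
  set l : ℕ := n₀ + 1 with hldef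
  set vf : ℕ → α := fun i => if i = 0 ∨ i = l then v else x (i - 1) with hvf
  set ef : ℕ → Finset α := fun i => p (i - 1) with hef
  have hvf0 : vf 0 = v := by simp [hvf]
  have hvfl : vf l = v := by simp [hvf]
  have hvfx : ∀ i, 1 ≤ i → i ≤ n₀ → vf i = x (i - 1) := by
    intro i h1 h2
    have : ¬ (i = 0 ∨ i = l) := by omega
    simp [hvf, this]
  have hFE : F ⊆ H.E := Finset.union_subset hM₁E hL₁E
  apply hH
  refine ⟨l, vf, ef, ⟨⟨by omega, ?_, ?_, by rw [hvf0, hvfl]⟩, ?_⟩, by rw [hldef]; exact hEven.add_one⟩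
  · -- edge incidences
    intro i h1 h2
    refine ⟨hFE (hmem (i - 1) (by omega)), ?_, ?_⟩
    · -- vf (i-1) ∈ ef i = p (i - 1)
      rcases Nat.eq_or_lt_of_le h1 with h1' | h1'
      · have : i - 1 = 0 := by omega
        rw [this, hvf0]
        show v ∈ p (i - 1)
        rw [this]
        exact hp0v
      · have hge : 1 ≤ i - 1 := by omega
        rw [hvfx (i - 1) hge (by omega)]
        show x (i - 1 - 1) ∈ p (i - 1)
        have harith : i - 1 = (i - 1 - 1) + 1 := by omega
        rw [harith]
        exact (hx (i - 1 - 1) (by omega)).2.2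
    · -- vf i ∈ ef i = p (i - 1)
      rcases Nat.eq_or_lt_of_le h2 with h2' | h2'
      · rw [h2', hvfl]
        show v ∈ p (l - 1)
        have : l - 1 = n₀ := by omega
        rw [this]
        exact hpnv
      · rw [hvfx i h1 (by omega)]
        exact (hx (i - 1) (by omega)).2.1
  · -- injectivity of cycle vertices
    intro i j hi hj heq
    rcases Nat.eq_zero_or_pos i with rfl | hi1
    · rcases Nat.eq_zero_or_pos j with rfl | hj1
      · rfl
      · rw [hvf0, hvfx j hj1 (by omega)] at heq
        exact absurd heq.symm (hx (j - 1) (by omega)).1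
    · rcases Nat.eq_zero_or_pos j with rfl | hj1
      · rw [hvf0, hvfx i hi1 (by omega)] at heq
        exact absurd heq (hx (i - 1) (by omega)).1
      · rw [hvfx i hi1 (by omega), hvfx j hj1 (by omega)] at heq
        rcases Nat.lt_trichotomy (i - 1) (j - 1) with h | h | h
        · exact absurd heq (hxinj _ _ h (by omega))
        · omega
        · exact absurd heq.symm (hxinj _ _ h (by omega))
  · -- strongness
    intro i h1 h2
    have hsub : ef i ∩ (Finset.range l).image vf ⊆ {vf (i - 1), vf (i % l)} := by
      intro y hy
      rcases Finset.mem_inter.mp hy with ⟨hyp, hyim⟩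
      obtain ⟨j, hj, rfl⟩ := Finset.mem_image.mp hyim
      have hjl : j < l := Finset.mem_range.mp hj
      rcases Nat.eq_zero_or_pos j with rfl | hj1
      · -- vf 0 = v ∈ p (i-1)
        rw [hvf0] at hyp ⊢
        have := hvloc (i - 1) (by omega) hyp
        rcases this with h | h
        · have : i = 1 := by omega
          subst this
          simp [hvf0]
        · have hil : i = l := by omega
          have : i % l = 0 := by rw [hil, Nat.mod_self]
          rw [this, hvf0]
          simp
      · rw [hvfx j hj1 (by omega)] at hyp ⊢
        have hl2 := hloc (j - 1) (i - 1) (by omega) (by omega) hyp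
        rcases hl2 with h | h
        · -- i - 1 = j - 1, so j = i ≤ n₀ < l, i % l = i
          have hji : j = i := by omega
          have hin : i < l := by omega
          have : i % l = i := Nat.mod_eq_of_lt hin
          rw [this]
          subst hji
          simp [hvfx j hj1 (by omega)]
        · -- i - 1 = j, y = vf (i - 1)
          have : vf (i - 1) = x (j - 1) := by
            rw [hvfx (i - 1) (by omega) (by omega)]
            congr 1
            omega
          rw [this]
          simp
    calc (ef i ∩ (Finset.range l).image vf).card
        ≤ ({vf (i - 1), vf (i % l)} : Finset α).card := Finset.card_le_card hsub
      _ ≤ 2 := le_trans (Finset.card_insert_le _ _) (by simp)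

end HGAux
namespace HGAux

open Finset

variable {α : Type*} [DecidableEq α]

/-- Helper: sets intersecting inside `{v}` with `v` missing from one of them are disjoint. -/
lemma disjoint_of_inter_subset {a b : Finset α} {v : α} (h : a ∩ b ⊆ {v}) (hv : v ∉ a ∨ v ∉ b) :
    Disjoint a b := by
  rw [Finset.disjoint_left]
  intro x hxa hxb
  have hx : x = v := Finset.mem_singleton.mp (h (Finset.mem_inter.mpr ⟨hxa, hxb⟩))
  subst hx
  rcases hv with h' | h'
  · exact h' hxa
  · exact h' hxb

/-- Core lemma: if `M` is a maximum matching avoiding `v`, and `L` is a family of edges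
pairwise intersecting only in `v`, then the total size of `L` is at most that of `M`. -/
lemma core (H : FinHypergraph α) (hH : H.Balanced) (v : α) (M L : Finset (Finset α))
    (hME : M ⊆ H.E) (hLE : L ⊆ H.E)
    (hMdis : ∀ a ∈ M, ∀ b ∈ M, a ≠ b → Disjoint a b)
    (hMv : ∀ m ∈ M, v ∉ m)
    (hL : ∀ a ∈ L, ∀ b ∈ L, a ≠ b → a ∩ b ⊆ {v})
    (hmax : ∀ N, H.IsMatching N → ∑ n ∈ N, n.card ≤ ∑ m ∈ M, m.card) :
    ∑ e ∈ L, e.card ≤ ∑ m ∈ M, m.card := by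
  classical
  set M₁ : Finset (Finset α) := M \ L with hM₁def
  set L₁ : Finset (Finset α) := L \ M with hL₁def
  set F : Finset (Finset α) := M₁ ∪ L₁ with hFdef
  have hM₁M : M₁ ⊆ M := Finset.sdiff_subset
  have hL₁L : L₁ ⊆ L := Finset.sdiff_subset
  have hML : Disjoint M₁ L₁ := by
    rw [Finset.disjoint_left]
    intro a haM haL
    exact (Finset.mem_sdiff.mp haL).2 (hM₁M haM)
  by_cases hNC : ∃ s ∈ L₁, ∃ s' ∈ L₁, v ∈ s ∧ v ∈ s' ∧ s ≠ s' ∧ Conn v F s s'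
  · obtain ⟨s, hs, s', hs', hvs, hvs', hss, hconn⟩ := hNC
    exact absurd hconn (fun hc => no_two_conn H hH v M₁ L₁ (hM₁M.trans hME) (hL₁L.trans hLE)
      (fun a ha b hb hab => hMdis a (hM₁M ha) b (hM₁M hb) hab)
      (fun m hm => hMv m (hM₁M hm))
      (fun a ha b hb hab => hL a (hL₁L ha) b (hL₁L hb) hab)
      hML hs hs' hvs hvs' hss hc)
  · push_neg at hNC
    have hNC' : ∀ s ∈ L₁, ∀ s' ∈ L₁, v ∈ s → v ∈ s' → Conn v F s s' → s = s' := by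
      intro s hs s' hs' h1 h2 hc
      by_contra hne
      exact hNC s hs s' hs' h1 h2 hne hc
    -- swap inequality for each component K
    have hswap : ∀ f, ∀ (K : Finset (Finset α)), (∀ b, b ∈ K ↔ b ∈ F ∧ Conn v F f b) →
        ∑ b ∈ K ∩ L₁, b.card ≤ ∑ b ∈ K ∩ M₁, b.card := by
      intro f K hK
      have hKF : K ⊆ F := fun b hb => ((hK b).mp hb).1
      have hconnK : ∀ b ∈ K, Conn v F f b := fun b hb => ((hK b).mp hb).2
      have hcross : ∀ a ∈ M \ K, ∀ b ∈ L₁ ∩ K, Disjoint a b := by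
        intro a ha b hb
        rcases Finset.mem_sdiff.mp ha with ⟨haM, haK⟩
        rcases Finset.mem_inter.mp hb with ⟨hbL₁, hbK⟩
        have hva : v ∉ a := hMv a haM
        by_cases haL : a ∈ L
        · have hab : a ≠ b := fun h => (Finset.mem_sdiff.mp hbL₁).2 (h ▸ haM)
          exact disjoint_of_inter_subset (hL a haL b (hL₁L hbL₁) hab) (Or.inl hva)
        · have haM₁ : a ∈ M₁ := Finset.mem_sdiff.mpr ⟨haM, haL⟩
          rw [Finset.disjoint_left]
          intro x hxa hxb
          have hxv : x ≠ v := fun h => hva (h ▸ hxa)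
          have hadj : Adj v F b a := ⟨hKF hbK, Finset.mem_union_left _ haM₁,
            ⟨x, Finset.mem_erase.mpr ⟨hxv, Finset.mem_inter.mpr ⟨hxb, hxa⟩⟩⟩⟩
          have hca : Conn v F f a := Relation.ReflTransGen.tail (hconnK b hbK) hadj
          exact haK ((hK a).mpr ⟨Finset.mem_union_left _ haM₁, hca⟩)
      set N : Finset (Finset α) := (M \ K) ∪ (L₁ ∩ K) with hNdef
      have hNmatch : H.IsMatching N := by
        constructor
        · exact Finset.union_subset ((Finset.sdiff_subset).trans hME)
            (((Finset.inter_subset_left).trans hL₁L).trans hLE)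
        · intro a ha b hb hab
          rcases Finset.mem_union.mp ha with haM | haL
          · rcases Finset.mem_union.mp hb with hbM | hbL
            · exact hMdis a (Finset.mem_sdiff.mp haM).1 b (Finset.mem_sdiff.mp hbM).1 hab
            · exact hcross a haM b hbL
          · rcases Finset.mem_union.mp hb with hbM | hbL
            · exact (hcross b hbM a haL).symm
            · rcases Finset.mem_inter.mp haL with ⟨haL₁, haK⟩
              rcases Finset.mem_inter.mp hbL with ⟨hbL₁, hbK⟩
              have hsub : a ∩ b ⊆ {v} := hL a (hL₁L haL₁) b (hL₁L hbL₁) hab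
              refine disjoint_of_inter_subset hsub ?_
              by_contra hcon
              push_neg at hcon
              obtain ⟨hva, hvb⟩ := hcon
              exact hab (hNC' a haL₁ b hbL₁ hva hvb
                (conn_trans v F (conn_symm v F (hconnK a haK)) (hconnK b hbK)))
      have hval := hmax N hNmatch
      have hdisjN : Disjoint (M \ K) (L₁ ∩ K) := by
        rw [Finset.disjoint_left]
        intro a haM haL
        exact (Finset.mem_sdiff.mp ((Finset.mem_inter.mp haL).1)).2 (Finset.mem_sdiff.mp haM).1
      rw [hNdef, Finset.sum_union hdisjN] at hval
      have hMsplit : ∑ b ∈ M ∩ K, b.card + ∑ b ∈ M \ K, b.card = ∑ m ∈ M, m.card :=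
        Finset.sum_inter_add_sum_sdiff M K _
      have hMK : M ∩ K = K ∩ M₁ := by
        apply Finset.ext
        intro b
        constructor
        · intro hb
          rcases Finset.mem_inter.mp hb with ⟨hbM, hbK⟩
          refine Finset.mem_inter.mpr ⟨hbK, ?_⟩
          rcases Finset.mem_union.mp (hKF hbK) with h | h
          · exact h
          · exact absurd hbM (Finset.mem_sdiff.mp h).2
        · intro hb
          rcases Finset.mem_inter.mp hb with ⟨hbK, hbM₁⟩
          exact Finset.mem_inter.mpr ⟨hM₁M hbM₁, hbK⟩
      have hLK : K ∩ L₁ = L₁ ∩ K := Finset.inter_comm _ _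
      rw [hLK]
      rw [← hMsplit, hMK] at hval
      omega
    -- sum over components
    have hkey : ∑ b ∈ L₁, b.card ≤ ∑ b ∈ M₁, b.card := by
      have hcomp := comp_sum (fun b => if b ∈ L₁ then b.card else 0)
        (fun b => if b ∈ M₁ then b.card else 0) (Conn v F)
        (fun a b h => conn_symm v F h) (fun a b c h1 h2 => conn_trans v F h1 h2)
        F.card F rfl (fun a _ => Relation.ReflTransGen.refl) ?_
      · have e1 : ∑ b ∈ F, (if b ∈ L₁ then b.card else 0) = ∑ b ∈ L₁, b.card := by
          rw [Finset.sum_ite_mem]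
          congr 1
          exact Finset.inter_eq_right.mpr (Finset.subset_union_right)
        have e2 : ∑ b ∈ F, (if b ∈ M₁ then b.card else 0) = ∑ b ∈ M₁, b.card := by
          rw [Finset.sum_ite_mem]
          congr 1
          exact Finset.inter_eq_right.mpr (Finset.subset_union_left)
        rwa [e1, e2] at hcomp
      · intro f hf
        rw [Finset.sum_ite_mem, Finset.sum_ite_mem]
        exact hswap f _ (fun b => by simp [Finset.mem_filter])
    -- conclude
    have hLsplit : ∑ b ∈ L ∩ M, b.card + ∑ b ∈ L \ M, b.card = ∑ e ∈ L, e.card :=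
      Finset.sum_inter_add_sum_sdiff L M _
    have hMsplit : ∑ b ∈ M ∩ L, b.card + ∑ b ∈ M \ L, b.card = ∑ m ∈ M, m.card :=
      Finset.sum_inter_add_sum_sdiff M L _
    have hcomm : L ∩ M = M ∩ L := Finset.inter_comm _ _
    rw [hcomm] at hLsplit
    rw [← hM₁def] at hMsplit
    rw [← hL₁def] at hLsplit
    omega

end HGAux
namespace HGAux

open Finset

variable {α : Type*} [DecidableEq α]

/-- Any matching of `H ∖ v` covers at most as many vertices as a maximum matching of `H`
avoiding `v`, provided `H` is balanced. -/
lemma delV_matching_le (H : FinHypergraph α) (hH : H.Balanced) (v : α)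
    {M : Finset (Finset α)} (hM : H.IsMaxVMatching M) (hMv : ∀ m ∈ M, v ∉ m)
    {M' : Finset (Finset α)} (hM' : (H.delV v).IsMatching M') :
    ∑ m ∈ M', m.card ≤ ∑ m ∈ M, m.card := by
  classical
  have hlift : ∀ m' ∈ M', ∃ e, e ∈ H.E ∧ e.erase v = m' := by
    intro m' hm'
    have h := hM'.1 hm'
    rw [FinHypergraph.delV] at h
    simp only [Finset.mem_filter, Finset.mem_image] at h
    obtain ⟨⟨e, he, hev⟩, -⟩ := h
    exact ⟨e, he, hev⟩
  set g : Finset α → Finset α :=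
    fun m' => if h : ∃ e, e ∈ H.E ∧ e.erase v = m' then h.choose else ∅ with hgdef
  have hg : ∀ m' ∈ M', g m' ∈ H.E ∧ (g m').erase v = m' := by
    intro m' hm'
    have h := hlift m' hm'
    have : g m' = h.choose := by simp [hgdef, h]
    rw [this]
    exact h.choose_spec
  have hsubg : ∀ m' ∈ M', m' ⊆ g m' := by
    intro m' hm' z hz
    have h2 := (hg m' hm').2
    rw [← h2] at hz
    exact Finset.mem_of_mem_erase hz
  have hinj : ∀ a ∈ M', ∀ b ∈ M', g a = g b → a = b := by
    intro a ha b hb hab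
    rw [← (hg a ha).2, ← (hg b hb).2, hab]
  set L : Finset (Finset α) := M'.image g with hLdef
  have hLE : L ⊆ H.E := by
    intro e he
    obtain ⟨m', hm', rfl⟩ := Finset.mem_image.mp he
    exact (hg m' hm').1
  have hLpair : ∀ a ∈ L, ∀ b ∈ L, a ≠ b → a ∩ b ⊆ {v} := by
    intro a ha b hb hab
    obtain ⟨x, hx, rfl⟩ := Finset.mem_image.mp ha
    obtain ⟨y, hy, rfl⟩ := Finset.mem_image.mp hb
    have hxy : x ≠ y := fun h => hab (by rw [h])
    intro z hz
    rcases Finset.mem_inter.mp hz with ⟨hz1, hz2⟩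
    by_contra hzv
    rw [Finset.mem_singleton] at hzv
    have hz1' : z ∈ x := by
      rw [← (hg x hx).2]; exact Finset.mem_erase.mpr ⟨hzv, hz1⟩
    have hz2' : z ∈ y := by
      rw [← (hg y hy).2]; exact Finset.mem_erase.mpr ⟨hzv, hz2⟩
    exact Finset.disjoint_left.mp (hM'.2 x hx y hy hxy) hz1' hz2'
  have hvalL : ∑ m ∈ M', m.card ≤ ∑ e ∈ L, e.card := by
    rw [hLdef, Finset.sum_image hinj]
    exact Finset.sum_le_sum (fun m' hm' => Finset.card_le_card (hsubg m' hm'))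
  have hcore := core H hH v M L hM.1.1 hLE
    (fun a ha b hb hab => hM.1.2 a ha b hb hab) hMv hLpair (fun N hN => hM.2 N hN)
  exact le_trans hvalL hcore

end HGAux
/-- `⋎_V(H) = ⋎_V(H ∖ v)` for every `v ∈ D_H`. -/
theorem nuV_delV_of_mem_setD {α : Type*} [DecidableEq α] (H : FinHypergraph α)
    (hH : H.Balanced) :
    ∀ v ∈ H.setD, H.nuV = (H.delV v).nuV := by
  intro v hv
  obtain ⟨hvV, M, hMmax, hMavoid⟩ := hv
  have hdel : (H.delV v).IsMatching M :=
    HGAux.matching_delV_of_avoid hMmax.1 hMavoid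
  apply le_antisymm
  · rw [HGAux.nuV_eq_val_of_max hMmax]
    exact HGAux.val_le_nuV _ hdel
  · rw [HGAux.nuV_eq_val_of_max hMmax]
    apply HGAux.nuV_le
    intro M' hM'
    exact HGAux.delV_matching_le H hH v hMmax hMavoid hM'
end

section
/- Let H=(V,E) be a bipartite graph (viewed as a hypergraph, i.e. all edges have cardinality at most 2 and H has no odd cycle). Then A_H = P_H and C_H = M_H. -/
open Finset

/-- A hypergraph: a finite vertex set `V` and a finite collection `E` of nonempty
subsets of `V` whose union is `V`. -/
structure Hypergraph' (α : Type*) [DecidableEq α] where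
  V : Finset α
  E : Finset (Finset α)
  edge_nonempty : ∀ e ∈ E, e.Nonempty
  edge_subset : ∀ e ∈ E, e ⊆ V
  vertex_mem : ∀ v ∈ V, ∃ e ∈ E, v ∈ e

namespace Hypergraph'

variable {α : Type*} [DecidableEq α]

/-- A cycle of length `l`: a sequence `v 0, e 1, v 1, e 2, …, e l, v l` with
`v (i-1), v i ∈ e i`, the vertices `v 0, …, v (l-1)` pairwise distinct and `v l = v 0`. -/
def IsCycle (H : Hypergraph' α) (l : ℕ) (v : ℕ → α) (e : ℕ → Finset α) : Prop :=
  2 ≤ l ∧ (∀ i, 1 ≤ i → i ≤ l → e i ∈ H.E ∧ v (i - 1) ∈ e i ∧ v i ∈ e i) ∧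
    (∀ i j, i < l → j < l → v i = v j → i = j) ∧ v l = v 0

/-- A strong cycle: no edge of the cycle contains three vertices of the cycle. -/
def IsStrongCycle (H : Hypergraph' α) (l : ℕ) (v : ℕ → α) (e : ℕ → Finset α) : Prop :=
  H.IsCycle l v e ∧ ∀ i, 1 ≤ i → i ≤ l → (e i ∩ (Finset.range l).image v).card ≤ 2

/-- A hypergraph is balanced if it has no strong cycle of odd length. -/
def Balanced (H : Hypergraph' α) : Prop :=
  ¬ ∃ (l : ℕ) (v : ℕ → α) (e : ℕ → Finset α), H.IsStrongCycle l v e ∧ Odd l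

/-- A matching: a set of pairwise disjoint edges. -/
def IsMatching (H : Hypergraph' α) (M : Finset (Finset α)) : Prop :=
  M ⊆ H.E ∧ ∀ e ∈ M, ∀ f ∈ M, e ≠ f → Disjoint e f

/-- The `d`-matching number `⋎_d(H)`: the maximum of `∑ m ∈ M, d m` over matchings `M`. -/
noncomputable def nuW (H : Hypergraph' α) (d : Finset α → ℕ) : ℕ :=
  sSup ((fun M => ∑ m ∈ M, d m) '' {M | H.IsMatching M})

/-- The matching number `⋎_E(H)`: the maximum number of edges of a matching. -/
noncomputable def nuE (H : Hypergraph' α) : ℕ :=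
  sSup ((fun M : Finset (Finset α) => M.card) '' {M | H.IsMatching M})

/-- The matching number `⋎_V(H)`: the maximum number of vertices covered by a matching. -/
noncomputable def nuV (H : Hypergraph' α) : ℕ :=
  sSup ((fun M : Finset (Finset α) => ∑ m ∈ M, m.card) '' {M | H.IsMatching M})

/-- A `d`-vertex cover: `x : α → ℕ` with `∑_{u ∈ e} x u ≥ d e` for every edge `e`. -/
def IsCover (H : Hypergraph' α) (d : Finset α → ℕ) (x : α → ℕ) : Prop :=
  ∀ e ∈ H.E, d e ≤ ∑ u ∈ e, x u

/-- The `d`-vertex cover number `τ_d(H)`. -/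
noncomputable def tauW (H : Hypergraph' α) (d : Finset α → ℕ) : ℕ :=
  sInf ((fun x : α → ℕ => ∑ u ∈ H.V, x u) '' {x | H.IsCover d x})

/-- An `E`-vertex cover: every edge gets total weight at least `1`. -/
def IsECover (H : Hypergraph' α) (x : α → ℕ) : Prop :=
  H.IsCover (fun _ => 1) x

/-- A `V`-vertex cover: every edge `e` gets total weight at least `|e|`. -/
def IsVCover (H : Hypergraph' α) (x : α → ℕ) : Prop :=
  H.IsCover (fun e => e.card) x

/-- The `E`-vertex cover number `τ_E(H)`. -/
noncomputable def tauE (H : Hypergraph' α) : ℕ := H.tauW (fun _ => 1)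

/-- The `V`-vertex cover number `τ_V(H)`. -/
noncomputable def tauV (H : Hypergraph' α) : ℕ := H.tauW (fun e => e.card)

/-- A `V`-maximum matching: maximizes the number of covered vertices. -/
def IsMaxVMatching (H : Hypergraph' α) (M : Finset (Finset α)) : Prop :=
  H.IsMatching M ∧ ∀ M', H.IsMatching M' → ∑ m ∈ M', m.card ≤ ∑ m ∈ M, m.card

/-- An `E`-maximum matching: maximizes the number of edges. -/
def IsMaxEMatching (H : Hypergraph' α) (M : Finset (Finset α)) : Prop :=
  H.IsMatching M ∧ ∀ M', H.IsMatching M' → M'.card ≤ M.card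

/-- A minimum `V`-vertex cover. -/
def IsMinVCover (H : Hypergraph' α) (x : α → ℕ) : Prop :=
  H.IsVCover x ∧ ∀ y, H.IsVCover y → ∑ u ∈ H.V, x u ≤ ∑ u ∈ H.V, y u

/-- A minimum `E`-vertex cover. -/
def IsMinECover (H : Hypergraph' α) (x : α → ℕ) : Prop :=
  H.IsECover x ∧ ∀ y, H.IsECover y → ∑ u ∈ H.V, x u ≤ ∑ u ∈ H.V, y u

/-- The hypergraph `H ∖ v = (V ∖ {v}, {e ∖ {v} : e ∈ E, e ∖ {v} ≠ ∅})`. -/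
def delV (H : Hypergraph' α) (v : α) : Hypergraph' α where
  V := H.V.erase v
  E := (H.E.image fun e => e.erase v).filter fun e => e.Nonempty
  edge_nonempty := fun e he => (Finset.mem_filter.mp he).2
  edge_subset := by
    intro e he
    obtain ⟨f, hf, rfl⟩ := Finset.mem_image.mp (Finset.mem_filter.mp he).1
    exact Finset.erase_subset_erase v (H.edge_subset f hf)
  vertex_mem := by
    intro u hu
    obtain ⟨hne, huV⟩ := Finset.mem_erase.mp hu
    obtain ⟨e, he, hue⟩ := H.vertex_mem u huV
    exact ⟨e.erase v,
      Finset.mem_filter.mpr ⟨Finset.mem_image_of_mem _ he,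
        ⟨u, Finset.mem_erase.mpr ⟨hne, hue⟩⟩⟩,
      Finset.mem_erase.mpr ⟨hne, hue⟩⟩

/-- `D_H`: vertices not covered by at least one `V`-maximum matching. -/
def setD (H : Hypergraph' α) : Set α :=
  {v | v ∈ H.V ∧ ∃ M, H.IsMaxVMatching M ∧ ∀ m ∈ M, v ∉ m}

/-- `P_H`: vertices having weight at least `2` in every minimum `V`-vertex cover. -/
def setP (H : Hypergraph' α) : Set α :=
  {v | v ∈ H.V ∧ ∀ x, H.IsMinVCover x → 2 ≤ x v}

/-- `M_H = V ∖ (D_H ∪ P_H)`. -/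
def setM (H : Hypergraph' α) : Set α :=
  {v | v ∈ H.V ∧ v ∉ H.setD ∧ v ∉ H.setP}

/-- `A_H`: vertices outside `D_H` lying in a common edge with some vertex of `D_H`. -/
def setA (H : Hypergraph' α) : Set α :=
  {v | v ∈ H.V ∧ v ∉ H.setD ∧ ∃ e ∈ H.E, v ∈ e ∧ ∃ u ∈ H.setD, u ∈ e}

/-- `C_H = V ∖ (A_H ∪ D_H)`. -/
def setC (H : Hypergraph' α) : Set α :=
  {v | v ∈ H.V ∧ v ∉ H.setA ∧ v ∉ H.setD}

/-- `F_H`: vertices not covered by at least one `E`-maximum matching. -/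
def setF (H : Hypergraph' α) : Set α :=
  {v | v ∈ H.V ∧ ∃ M, H.IsMaxEMatching M ∧ ∀ m ∈ M, v ∉ m}

/-- `Q_H`: vertices having weight exactly `1` in every minimum `E`-vertex cover. -/
def setQ (H : Hypergraph' α) : Set α :=
  {v | v ∈ H.V ∧ ∀ x, H.IsMinECover x → x v = 1}

/-- `N_H = V ∖ (Q_H ∪ F_H)`. -/
def setN (H : Hypergraph' α) : Set α :=
  {v | v ∈ H.V ∧ v ∉ H.setQ ∧ v ∉ H.setF}

/-- Degree of a vertex. -/
def degree (H : Hypergraph' α) (v : α) : ℕ := (H.E.filter fun e => v ∈ e).card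

/-- Maximum degree `Δ(H)`. -/
def maxDegree (H : Hypergraph' α) : ℕ := H.V.sup H.degree

/-- Factor critical: `H ∖ v` has a perfect matching for every vertex `v`. -/
def FactorCritical (H : Hypergraph' α) : Prop :=
  ∀ v ∈ H.V, ∃ M, (H.delV v).IsMatching M ∧ ∀ u ∈ (H.delV v).V, ∃ m ∈ M, u ∈ m

/-- A stable set: no subset of size at least two is contained in an edge. -/
def IsStable (H : Hypergraph' α) (S : Finset α) : Prop :=
  S ⊆ H.V ∧ ∀ T ⊆ S, 2 ≤ T.card → ∀ e ∈ H.E, ¬ T ⊆ e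

/-- A maximum weight stable set with regard to the weight function `d`. -/
def IsMaxWeightStable (H : Hypergraph' α) (d : α → ℕ) (S : Finset α) : Prop :=
  H.IsStable S ∧ ∀ T, H.IsStable T → ∑ u ∈ T, d u ≤ ∑ u ∈ S, d u

/-- `K` is the subhypergraph of `H` induced by some vertex set `W`. -/
def IsSubhypergraph (H K : Hypergraph' α) : Prop :=
  ∃ W : Finset α, W ⊆ H.V ∧ K.V = W ∧
    K.E = (H.E.image fun e => e ∩ W).filter fun e => e.Nonempty

/-- `K` is a partial hypergraph of `H`: generated by a subset of the edges of `H`. -/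
def IsPartialHypergraph (H K : Hypergraph' α) : Prop := K.E ⊆ H.E

/-- `K` is a partial subhypergraph of `H`: a partial hypergraph of a subhypergraph
of `H`, or a subhypergraph of a partial hypergraph of `H`. -/
def IsPartialSubhypergraph (H K : Hypergraph' α) : Prop :=
  (∃ G : Hypergraph' α, H.IsSubhypergraph G ∧ G.IsPartialHypergraph K) ∨
  (∃ G : Hypergraph' α, H.IsPartialHypergraph G ∧ G.IsSubhypergraph K)

end Hypergraph'


namespace GEAux

open Finset List

variable {α : Type*} [DecidableEq α]

/-- Auxiliary adjacency relation. -/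
def Adj (H : Hypergraph' α) (a b : α) : Prop :=
  a ≠ b ∧ ∃ e ∈ H.E, a ∈ e ∧ b ∈ e

lemma adj_symm {H : Hypergraph' α} {a b : α} (h : Adj H a b) : Adj H b a :=
  ⟨h.1.symm, h.2.imp fun e ⟨he, ha, hb⟩ => ⟨he, hb, ha⟩⟩

/-- An edge with two distinct members is a pair. -/
lemma pair_eq {H : Hypergraph' α} (hg : ∀ e ∈ H.E, e.card ≤ 2) {e : Finset α} {p q : α}
    (he : e ∈ H.E) (hp : p ∈ e) (hq : q ∈ e) (hpq : p ≠ q) : e = {p, q} := by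
  refine (Finset.eq_of_subset_of_card_le ?_ ?_).symm
  · intro w hw
    simp only [Finset.mem_insert, Finset.mem_singleton] at hw
    rcases hw with rfl | rfl <;> assumption
  · calc e.card ≤ 2 := hg e he
    _ = ({p, q} : Finset α).card := (Finset.card_pair hpq).symm

lemma match_unique {H : Hypergraph' α} {M : Finset (Finset α)} (hM : H.IsMatching M)
    {m m' : Finset α} (hm : m ∈ M) (hm' : m' ∈ M) {v : α} (hv : v ∈ m) (hv' : v ∈ m') :
    m = m' := by
  by_contra hne
  exact Finset.disjoint_left.mp (hM.2 m hm m' hm' hne) hv hv'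

lemma exists_maxVMatching (H : Hypergraph' α) : ∃ M, H.IsMaxVMatching M := by
  classical
  have hne : (H.E.powerset.filter fun M => H.IsMatching M).Nonempty := by
    refine ⟨∅, Finset.mem_filter.mpr ⟨Finset.mem_powerset.mpr (Finset.empty_subset _), ?_⟩⟩
    exact ⟨Finset.empty_subset _, by simp⟩
  obtain ⟨M, hMmem, hMmax⟩ := Finset.exists_max_image _ (fun M => ∑ m ∈ M, m.card) hne
  refine ⟨M, (Finset.mem_filter.mp hMmem).2, fun M' hM' => ?_⟩
  exact hMmax M' (Finset.mem_filter.mpr ⟨Finset.mem_powerset.mpr hM'.1, hM'⟩)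

lemma max_sum_eq {H : Hypergraph' α} {M M' : Finset (Finset α)}
    (h : H.IsMaxVMatching M) (h' : H.IsMaxVMatching M') :
    ∑ m ∈ M, m.card = ∑ m ∈ M', m.card :=
  le_antisymm (h'.2 M h.1) (h.2 M' h'.1)

lemma mkMax {H : Hypergraph' α} {M M' : Finset (Finset α)} (hM : H.IsMaxVMatching M)
    (h1 : H.IsMatching M') (h2 : ∑ m ∈ M', m.card = ∑ m ∈ M, m.card) :
    H.IsMaxVMatching M' :=
  ⟨h1, fun M'' hM'' => le_trans (hM.2 M'' hM'') (le_of_eq h2.symm)⟩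

/-- Exposed (uncovered) vertex with respect to a matching. -/
def Exp (H : Hypergraph' α) (M : Finset (Finset α)) (v : α) : Prop :=
  v ∈ H.V ∧ ∀ m ∈ M, v ∉ m

/-- Alternating walks (no distinctness requirement), grown from an exposed base at the head. -/
inductive Walk (H : Hypergraph' α) (M : Finset (Finset α)) : Bool → α → List α → Prop
  | base {v : α} : Exp H M v → Walk H M false v [v]
  | odd {p : α} {l : List α} {e : Finset α} {q : α} :
      Walk H M false p l → e ∈ H.E → p ∈ e → q ∈ e → q ≠ p → Walk H M true q (q :: l)
  | even {q : α} {l : List α} {m : Finset α} {r : α} :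
      Walk H M true q l → m ∈ M → q ∈ m → r ∈ m → r ≠ q → Walk H M false r (r :: l)

/-- Alternating paths: walks with distinct vertices. -/
inductive Alt (H : Hypergraph' α) (M : Finset (Finset α)) : Bool → α → List α → Prop
  | base {v : α} : Exp H M v → Alt H M false v [v]
  | odd {p : α} {l : List α} {e : Finset α} {q : α} :
      Alt H M false p l → e ∈ H.E → p ∈ e → q ∈ e → q ≠ p → q ∉ l → Alt H M true q (q :: l)
  | even {q : α} {l : List α} {m : Finset α} {r : α} :
      Alt H M true q l → m ∈ M → q ∈ m → r ∈ m → r ≠ q → r ∉ l → Alt H M false r (r :: l)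

variable {H : Hypergraph' α} {M : Finset (Finset α)}

lemma Walk.head' : ∀ {b v l}, Walk H M b v l → ∃ t, l = v :: t := by
  rintro b v l (_ | _ | _) <;> exact ⟨_, rfl⟩

lemma Alt.head' : ∀ {b v l}, Alt H M b v l → ∃ t, l = v :: t := by
  rintro b v l (_ | _ | _) <;> exact ⟨_, rfl⟩

lemma Alt.toWalk : ∀ {b v l}, Alt H M b v l → Walk H M b v l := by
  intro b v l h
  induction h with
  | base h => exact Walk.base h
  | odd _ he hp hq hqp _ ih => exact Walk.odd ih he hp hq hqp
  | even _ hm hq hr hrq _ ih => exact Walk.even ih hm hq hr hrq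

lemma Alt.nodup : ∀ {b v l}, Alt H M b v l → l.Nodup := by
  intro b v l h
  induction h with
  | base _ => simp
  | odd _ _ _ _ _ hq ih => exact List.nodup_cons.mpr ⟨hq, ih⟩
  | even _ _ _ _ _ hr ih => exact List.nodup_cons.mpr ⟨hr, ih⟩

lemma Walk.toAlt : ∀ {b v l}, Walk H M b v l → l.Nodup → Alt H M b v l := by
  intro b v l h
  induction h with
  | base h => exact fun _ => Alt.base h
  | odd _ he hp hq hqp ih =>
      intro hn
      rw [List.nodup_cons] at hn
      exact Alt.odd (ih hn.2) he hp hq hqp hn.1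
  | even _ hm hq hr hrq ih =>
      intro hn
      rw [List.nodup_cons] at hn
      exact Alt.even (ih hn.2) hm hq hr hrq hn.1

lemma Walk.parity : ∀ {b v l}, Walk H M b v l → l.length % 2 = (if b then 0 else 1) := by
  intro b v l h
  induction h with
  | base _ => simp
  | odd _ _ _ _ _ ih => simp only [List.length_cons]; simp at ih ⊢; omega
  | even _ _ _ _ _ ih => simp only [List.length_cons]; simp at ih ⊢; omega

lemma Walk.parity_true {v l} (h : Walk H M true v l) : l.length % 2 = 0 := by
  have := h.parity; simpa using this

lemma Walk.parity_false {v l} (h : Walk H M false v l) : l.length % 2 = 1 := by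
  have := h.parity; simpa using this

lemma Walk.chain' (hME : ∀ m ∈ M, m ∈ H.E) :
    ∀ {b v l}, Walk H M b v l → l.Chain' (Adj H) := by
  intro b v l h
  induction h with
  | base _ => exact List.isChain_singleton _
  | odd hw he hp hq hqp ih =>
      obtain ⟨t, rfl⟩ := hw.head'
      exact List.isChain_cons_cons.mpr ⟨⟨hqp, _, he, hq, hp⟩, ih⟩
  | even hw hm hq hr hrq ih =>
      obtain ⟨t, rfl⟩ := hw.head'
      exact List.isChain_cons_cons.mpr ⟨⟨hrq, _, hME _ hm, hr, hq⟩, ih⟩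


/-- The data produced by flipping an even alternating path: a `V`-maximum matching missing the
endpoint, containing all old matching edges away from the path, and all of whose edges are old
matching edges or lie inside the path. -/
def FlipData (H : Hypergraph' α) (M : Finset (Finset α)) (v : α) (l : List α) : Prop :=
  ∃ M', H.IsMaxVMatching M' ∧ (∀ m ∈ M', v ∉ m) ∧
    (∀ m ∈ M, (∀ w ∈ m, w ∉ l) → m ∈ M') ∧ (∀ m ∈ M', m ∈ M ∨ ∀ w ∈ m, w ∈ l)

lemma flip (hg : ∀ e ∈ H.E, e.card ≤ 2) (hM : H.IsMaxVMatching M) :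
    ∀ {v l}, Alt H M false v l → FlipData H M v l := by
  have key : ∀ {b w L}, Alt H M b w L →
      cond b (∃ p l₀ e, L = w :: l₀ ∧ Alt H M false p l₀ ∧ FlipData H M p l₀ ∧
        e ∈ H.E ∧ p ∈ e ∧ w ∈ e ∧ w ≠ p ∧ w ∉ l₀) (FlipData H M w L) := by
    intro b w L h
    induction h with
    | base h =>
        exact ⟨M, hM, fun m hm => h.2 m hm, fun m hm _ => hm, fun m hm => Or.inl hm⟩
    | @odd p l e q hp he hpe hqe hqp hql ih =>
        exact ⟨p, l, e, rfl, hp, ih, he, hpe, hqe, hqp, hql⟩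
    | @even q L m r hq hm hqm hrm hrq hrL ih =>
        obtain ⟨p, l₀, e, rfl, hpAlt, ⟨M', hM'max, hM'v, hpres, hsub⟩, he, hpe, hqe, hqp, hql₀⟩ := ih
        obtain ⟨t, hl₀⟩ := hpAlt.head'
        have hpl₀ : p ∈ l₀ := by rw [hl₀]; exact List.mem_cons_self
        have hrl₀ : r ∉ l₀ := fun hr => hrL (List.mem_cons_of_mem _ hr)
        have hrq' : r ≠ q := hrq
        have hrp : r ≠ p := fun hrp => hrl₀ (hrp ▸ hpl₀)
        have hqr : q ≠ r := fun h => hrq h.symm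
        have hmpair : m = {q, r} := pair_eq hg (hM.1.1 hm) hqm hrm hqr
        have hepair : e = {p, q} := pair_eq hg he hpe hqe (fun h => hqp h.symm)
        have hmM' : m ∈ M' := by
          refine hpres m hm ?_
          intro w hw
          rw [hmpair] at hw
          simp only [Finset.mem_insert, Finset.mem_singleton] at hw
          rcases hw with rfl | rfl
          · exact hql₀
          · exact hrl₀
        have hq_unique : ∀ m'' ∈ M', q ∈ m'' → m'' = m :=
          fun m'' hm'' hq'' => match_unique hM'max.1 hm'' hmM' hq'' hqm
        have heM' : e ∉ M' := fun hh => hM'v e hh hpe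
        set M'' := insert e (M'.erase m) with hM''
        have heNotErase : e ∉ M'.erase m := fun hh => heM' (Finset.mem_of_mem_erase hh)
        have hmatch : H.IsMatching M'' := by
          constructor
          · intro f hf
            rcases Finset.mem_insert.mp hf with rfl | hf
            · exact he
            · exact hM'max.1.1 (Finset.mem_of_mem_erase hf)
          · intro f hf g hg hfg
            have hdisj : ∀ g' ∈ M'.erase m, Disjoint e g' := by
              intro g' hg'
              rw [hepair, Finset.disjoint_left]
              intro w hw hw'
              simp only [Finset.mem_insert, Finset.mem_singleton] at hw
              rcases hw with rfl | rfl
              · exact hM'v g' (Finset.mem_of_mem_erase hg') hw'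
              · exact (Finset.mem_erase.mp hg').1 (hq_unique g' (Finset.mem_of_mem_erase hg') hw')
            rcases Finset.mem_insert.mp hf with rfl | hf'
            · rcases Finset.mem_insert.mp hg with rfl | hg'
              · exact absurd rfl hfg
              · exact hdisj g hg'
            · rcases Finset.mem_insert.mp hg with rfl | hg'
              · exact (hdisj f hf').symm
              · exact hM'max.1.2 f (Finset.mem_of_mem_erase hf') g
                  (Finset.mem_of_mem_erase hg') hfg
        have hsum : ∑ f ∈ M'', f.card = ∑ f ∈ M, f.card := by
          have h1 : ∑ f ∈ M'', f.card = e.card + ∑ f ∈ M'.erase m, f.card :=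
            Finset.sum_insert heNotErase
          have h2 : m.card + ∑ f ∈ M'.erase m, f.card = ∑ f ∈ M', f.card :=
            Finset.add_sum_erase M' _ hmM'
          have h3 : ∑ f ∈ M', f.card = ∑ f ∈ M, f.card := max_sum_eq hM'max hM
          have hec : e.card = 2 := by rw [hepair]; exact Finset.card_pair (fun h => hqp h.symm)
          have hmc : m.card = 2 := by rw [hmpair]; exact Finset.card_pair hqr
          omega
        refine ⟨M'', mkMax hM hmatch hsum, ?_, ?_, ?_⟩
        · intro f hf hrf
          rcases Finset.mem_insert.mp hf with rfl | hf
          · rw [hepair] at hrf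
            simp only [Finset.mem_insert, Finset.mem_singleton] at hrf
            rcases hrf with rfl | rfl
            · exact hrp rfl
            · exact hrq rfl
          · have := match_unique hM'max.1 (Finset.mem_of_mem_erase hf) hmM' hrf hrm
            exact (Finset.mem_erase.mp hf).1 this
        · intro f hf hw
          have hfM' : f ∈ M' := by
            refine hpres f hf ?_
            intro w' hw'
            have : w' ∉ r :: q :: l₀ := hw w' hw'
            intro hc
            exact this (List.mem_cons_of_mem _ (List.mem_cons_of_mem _ hc))
          have hfm : f ≠ m := by
            intro rfl'
            exact hw q (rfl' ▸ hqm) (List.mem_cons_of_mem _ (List.mem_cons_self))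
          exact Finset.mem_insert_of_mem (Finset.mem_erase.mpr ⟨hfm, hfM'⟩)
        · intro f hf
          rcases Finset.mem_insert.mp hf with rfl | hf
          · refine Or.inr ?_
            intro w hw
            rw [hepair] at hw
            simp only [Finset.mem_insert, Finset.mem_singleton] at hw
            rcases hw with rfl | rfl
            · exact List.mem_cons_of_mem _ (List.mem_cons_of_mem _ hpl₀)
            · exact List.mem_cons_of_mem _ (List.mem_cons_self)
          · rcases hsub f (Finset.mem_of_mem_erase hf) with h | h
            · exact Or.inl h
            · exact Or.inr fun w hw =>
                List.mem_cons_of_mem _ (List.mem_cons_of_mem _ (h w hw))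
  intro v l h
  exact key h


lemma dup_split : ∀ (l : List α), ¬ l.Nodup → ∃ A z B C, l = A ++ z :: B ++ z :: C := by
  intro l
  induction l with
  | nil => intro h; exact absurd List.nodup_nil h
  | cons a t ih =>
      intro h
      by_cases ha : a ∈ t
      · obtain ⟨s, u, rfl⟩ := List.append_of_mem ha
        exact ⟨[], a, s, u, rfl⟩
      · have : ¬ t.Nodup := fun hn => h (List.nodup_cons.mpr ⟨ha, hn⟩)
        obtain ⟨A, z, B, C, rfl⟩ := ih this
        exact ⟨a :: A, z, B, C, rfl⟩


lemma chain_getD {R : α → α → Prop} {l : List α} (d : α) (h : List.Chain' R l) :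
    ∀ i, i + 1 < l.length → R (l.getD i d) (l.getD (i+1) d) := by
  intro i hi
  rw [List.getD_eq_getElem l d (by omega), List.getD_eq_getElem l d hi]
  exact List.isChain_iff_getElem.mp h i hi

lemma nodup_getD {l : List α} (d : α) (h : l.Nodup) {i j : ℕ}
    (hi : i < l.length) (hj : j < l.length) (hij : l.getD i d = l.getD j d) : i = j := by
  rw [List.getD_eq_getElem l d hi, List.getD_eq_getElem l d hj] at hij
  exact (List.Nodup.getElem_inj_iff h).mp hij

/-- From an odd closed walk we get a contradiction with the absence of odd cycles. -/
lemma oc (H : Hypergraph' α)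
    (hbip : ¬ ∃ (l : ℕ) (v : ℕ → α) (e : ℕ → Finset α), H.IsCycle l v e ∧ Odd l) :
    ∀ (n : ℕ) (mid : List α) (w : α), mid.length ≤ n →
      List.Chain' (Adj H) (w :: mid ++ [w]) → (mid.length + 1) % 2 = 1 → False := by
  intro n
  induction n with
  | zero =>
      intro mid w hlen hch _
      rw [List.length_eq_zero_iff.mp (Nat.le_zero.mp hlen)] at hch
      have h' : List.Chain' (Adj H) [w, w] := by simpa using hch
      exact (List.isChain_pair.mp h').1 rfl
  | succ n ih =>
      intro mid w hlen hch hodd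
      by_cases hmidnil : mid = []
      · subst hmidnil
        have h' : List.Chain' (Adj H) [w, w] := by simpa using hch
        exact (List.isChain_pair.mp h').1 rfl
      have hmidpos : 1 ≤ mid.length := List.length_pos_iff.mpr hmidnil
      by_cases hnd : (w :: mid).Nodup
      · -- extract a genuine odd cycle
        set CL : List α := w :: mid ++ [w] with hCL
        have hCLlen : CL.length = mid.length + 2 := by simp [hCL]
        set v : ℕ → α := fun i => CL.getD i w with hv
        have hadj : ∀ i, i < mid.length + 1 → Adj H (v i) (v (i + 1)) := by
          intro i hi
          exact chain_getD w hch i (by omega)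
        have hvleft : ∀ i, i < mid.length + 1 → v i = (w :: mid).getD i w := by
          intro i hi
          simp only [hv, hCL]
          exact List.getD_append _ _ _ _ (by simp; omega)
        have hdist : ∀ i j, i < mid.length + 1 → j < mid.length + 1 → v i = v j → i = j := by
          intro i j hi hj hij
          rw [hvleft i hi, hvleft j hj] at hij
          exact nodup_getD w hnd (by simp; omega) (by simp; omega) hij
        have hv0 : v 0 = w := by simp [hv, hCL]
        have hvL : v (mid.length + 1) = w := by
          simp only [hv, hCL]
          rw [List.getD_eq_getElem _ _ (by rw [hCLlen]; omega)]
          rw [List.getElem_append_right (by simp)]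
          simp
        set ed : ℕ → Finset α := fun i =>
          if h : ∃ E', E' ∈ H.E ∧ v (i-1) ∈ E' ∧ v i ∈ E' then h.choose else ∅ with hed
        refine hbip ⟨mid.length + 1, v, ed, ⟨by omega, ?_, hdist, hvL.trans hv0.symm⟩, ?_⟩
        · intro i h1i hiL
          have hadj' := hadj (i - 1) (by omega)
          have hi1 : i - 1 + 1 = i := by omega
          rw [hi1] at hadj'
          obtain ⟨-, E', hE', hv1, hv2⟩ := hadj'
          have hex : ∃ E', E' ∈ H.E ∧ v (i-1) ∈ E' ∧ v i ∈ E' := ⟨E', hE', hv1, hv2⟩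
          simp only [hed, dif_pos hex]
          exact hex.choose_spec
        · rw [Nat.odd_iff]; exact hodd
      · -- split at a repeated vertex
        obtain ⟨A, z, B, C, hsp⟩ := dup_split _ hnd
        have hch' : List.Chain' (Adj H) (A ++ z :: (B ++ z :: (C ++ [w]))) := by
          have : w :: mid ++ [w] = A ++ z :: (B ++ z :: (C ++ [w])) := by
            rw [hsp]; simp
          rwa [this] at hch
        have h1 := (List.isChain_split (l₁ := A) (c := z)).mp hch'
        have h2 := (List.isChain_split (l₁ := z :: B) (c := z) (l₂ := C ++ [w])).mp
          (by simpa using h1.2)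
        have hinner : List.Chain' (Adj H) (z :: B ++ [z]) := by simpa [List.Chain'] using h2.1
        have houter : List.Chain' (Adj H) (A ++ z :: (C ++ [w])) :=
          (List.isChain_split (l₁ := A) (c := z)).mpr ⟨h1.1, h2.2⟩
        have hlensum : mid.length = A.length + B.length + C.length + 1 := by
          have h := congrArg List.length hsp
          simp at h
          omega
        by_cases hBodd : (B.length + 1) % 2 = 1
        · exact ih B z (by omega) (by simpa using hinner) hBodd
        · rcases A with _ | ⟨a, A'⟩
          · have hz : w = z := by
              have h := hsp
              simp only [List.nil_append] at h
              exact (List.cons_eq_cons.mp h).1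
            subst hz
            simp only [List.length_nil] at hlensum
            refine ih C w (by omega) (by simpa using houter) (by omega)
          · have ha : w = a := by
              have h := hsp
              simp only [List.cons_append] at h
              exact (List.cons_eq_cons.mp h).1
            subst ha
            simp only [List.length_cons] at hlensum
            refine ih (A' ++ z :: C) w (by simp; omega) ?_ (by simp; omega)
            simpa using houter


lemma not_exp_odd (hg : ∀ e ∈ H.E, e.card ≤ 2) (hM : H.IsMaxVMatching M)
    {q : α} {L : List α} (h : Alt H M true q L) (hq : Exp H M q) : False := by
  cases h with
  | @odd p l e _ hp he hpe hqe hqp hql =>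
    obtain ⟨M', hM'max, hM'p, hpres, hsub⟩ := flip hg hM hp
    have hqM' : ∀ m ∈ M', q ∉ m := by
      intro m hm hqm
      rcases hsub m hm with h' | h'
      · exact hq.2 m h' hqm
      · exact hql (h' q hqm)
    have he' : e ∉ M' := fun h' => hM'p e h' hpe
    have hepair : e = {p, q} := pair_eq hg he hpe hqe (fun h' => hqp h'.symm)
    have hmatch : H.IsMatching (insert e M') := by
      constructor
      · intro f hf
        rcases Finset.mem_insert.mp hf with rfl | hf
        · exact he
        · exact hM'max.1.1 hf
      · intro f hf g hg hfg
        have hdisj : ∀ g' ∈ M', Disjoint e g' := by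
          intro g' hg'
          rw [hepair, Finset.disjoint_left]
          intro w hw hw'
          simp only [Finset.mem_insert, Finset.mem_singleton] at hw
          rcases hw with rfl | rfl
          · exact hM'p g' hg' hw'
          · exact hqM' g' hg' hw'
        rcases Finset.mem_insert.mp hf with rfl | hf'
        · rcases Finset.mem_insert.mp hg with rfl | hg'
          · exact absurd rfl hfg
          · exact hdisj g hg'
        · rcases Finset.mem_insert.mp hg with rfl | hg'
          · exact (hdisj f hf').symm
          · exact hM'max.1.2 f hf' g hg' hfg
    have hsum : ∑ f ∈ insert e M', f.card = ∑ f ∈ M, f.card + 2 := by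
      rw [Finset.sum_insert he', max_sum_eq hM'max hM, hepair,
        Finset.card_pair (fun h' => hqp h'.symm)]
      omega
    have := hM.2 _ hmatch
    omega

lemma Walk.suffix : ∀ {b v L}, Walk H M b v L → ∀ A w B, L = A ++ w :: B →
    ∃ b', Walk H M b' w (w :: B) := by
  intro b v L h
  induction h with
  | @base v h =>
      intro A w B hAB
      rcases A with _ | ⟨a, A'⟩
      · obtain ⟨rfl, rfl⟩ := List.cons_eq_cons.mp (by simpa using hAB)
        exact ⟨false, Walk.base h⟩
      · exfalso
        have := congrArg List.length hAB
        simp at this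
  | @odd p l e q hw he hpe hqe hqp ih =>
      intro A w B hAB
      rcases A with _ | ⟨a, A'⟩
      · obtain ⟨rfl, rfl⟩ := List.cons_eq_cons.mp (by simpa using hAB)
        exact ⟨true, Walk.odd hw he hpe hqe hqp⟩
      · obtain ⟨rfl, hl⟩ := List.cons_eq_cons.mp (by simpa using hAB)
        exact ih A' w B hl
  | @even q l m r hw hm hqm hrm hrq ih =>
      intro A w B hAB
      rcases A with _ | ⟨a, A'⟩
      · obtain ⟨rfl, rfl⟩ := List.cons_eq_cons.mp (by simpa using hAB)
        exact ⟨false, Walk.even hw hm hqm hrm hrq⟩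
      · obtain ⟨rfl, hl⟩ := List.cons_eq_cons.mp (by simpa using hAB)
        exact ih A' w B hl

lemma Walk.graft : ∀ {b v L}, Walk H M b v L → ∀ A w B C b', L = A ++ w :: B →
    Walk H M b' w (w :: C) → B.length % 2 = C.length % 2 → Walk H M b v (A ++ w :: C) := by
  intro b v L h
  induction h with
  | @base v h =>
      intro A w B C b' hAB hW hpar
      rcases A with _ | ⟨a, A'⟩
      · obtain ⟨rfl, rfl⟩ := List.cons_eq_cons.mp (by simpa using hAB)
        simp only [List.length_nil] at hpar
        rcases b' with _ | _
        · exact hW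
        · exfalso; have hp := hW.parity_true; simp at hp; omega
      · exfalso
        have := congrArg List.length hAB
        simp at this
  | @odd p l e q hw he hpe hqe hqp ih =>
      intro A w B C b' hAB hW hpar
      rcases A with _ | ⟨a, A'⟩
      · obtain ⟨rfl, rfl⟩ := List.cons_eq_cons.mp (by simpa using hAB)
        have hp' := hw.parity_false
        rcases b' with _ | _
        · exfalso; have hp := hW.parity_false; simp at hp; omega
        · exact hW
      · obtain ⟨rfl, hl⟩ := List.cons_eq_cons.mp (by simpa using hAB)
        have := Walk.odd (ih A' w B C b' hl hW hpar) he hpe hqe hqp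
        simpa using this
  | @even q l m r hw hm hqm hrm hrq ih =>
      intro A w B C b' hAB hW hpar
      rcases A with _ | ⟨a, A'⟩
      · obtain ⟨rfl, rfl⟩ := List.cons_eq_cons.mp (by simpa using hAB)
        have hp' := hw.parity_true
        rcases b' with _ | _
        · exact hW
        · exfalso; have hp := hW.parity_true; simp at hp; omega
      · obtain ⟨rfl, hl⟩ := List.cons_eq_cons.mp (by simpa using hAB)
        have := Walk.even (ih A' w B C b' hl hW hpar) hm hqm hrm hrq
        simpa using this

lemma no_exp_walk (hg : ∀ e ∈ H.E, e.card ≤ 2) (hM : H.IsMaxVMatching M)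
    (hME : ∀ m ∈ M, m ∈ H.E)
    (hbip : ¬ ∃ (l : ℕ) (v : ℕ → α) (e : ℕ → Finset α), H.IsCycle l v e ∧ Odd l) :
    ∀ (n : ℕ) {u : α} {L : List α}, L.length ≤ n → Walk H M true u L → Exp H M u → False := by
  intro n
  induction n with
  | zero =>
      intro u L hlen hw _
      obtain ⟨t, rfl⟩ := hw.head'
      simp at hlen
  | succ n ih =>
      intro u L hlen hw hu
      by_cases hnd : L.Nodup
      · exact not_exp_odd hg hM (hw.toAlt hnd) hu
      · obtain ⟨A, z, B, C, hsp⟩ := dup_split _ hnd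
        have hLlen : L.length = A.length + B.length + C.length + 2 := by
          have := congrArg List.length hsp
          simp at this; omega
        obtain ⟨b₂, hW₂⟩ := hw.suffix (A ++ z :: B) z C (by rw [hsp])
        by_cases hB : (B.length + 1) % 2 = 0
        · -- graft the shortcut
          have hg' : Walk H M true u (A ++ z :: C) := by
            refine hw.graft A z (B ++ z :: C) C b₂ (by simp [hsp]) hW₂ ?_
            simp only [List.length_append, List.length_cons]; omega
          exact ih (by simp at hLlen ⊢; omega) hg' hu
        · -- odd closed walk
          obtain ⟨b₁, hW₁⟩ := hw.suffix A z (B ++ z :: C) (by simp [hsp])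
          have hch := hW₁.chain' hME
          have hch' : List.Chain' (Adj H) ((z :: B) ++ z :: C) := by simpa using hch
          have hinner := (List.isChain_split.mp hch').1
          exact oc H hbip B.length B z le_rfl (by simpa [List.Chain'] using hinner) (by omega)

lemma opp (hg : ∀ e ∈ H.E, e.card ≤ 2) (hM : H.IsMaxVMatching M)
    (hME : ∀ m ∈ M, m ∈ H.E)
    (hbip : ¬ ∃ (l : ℕ) (v : ℕ → α) (e : ℕ → Finset α), H.IsCycle l v e ∧ Odd l) :
    ∀ {b z l}, Walk H M b z l → ∀ {L}, Walk H M (!b) z L → False := by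
  intro b z l h
  induction h with
  | @base v h => exact fun hL => no_exp_walk hg hM hME hbip _ le_rfl hL h
  | @odd p l' e q hw he hpe hqe hqp ih =>
      intro L hL
      exact ih (Walk.odd hL he hqe hpe (fun h' => hqp h'.symm))
  | @even q l' m r hw hm hqm hrm hrq ih =>
      intro L hL
      exact ih (Walk.even hL hm hrm hqm (fun h' => hrq h'.symm))


/-- Evenly reachable vertices. -/
def Ev (H : Hypergraph' α) (M : Finset (Finset α)) (v : α) : Prop :=
  ∃ l, Alt H M false v l

/-- Oddly reachable vertices. -/
def Od (H : Hypergraph' α) (M : Finset (Finset α)) (v : α) : Prop :=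
  ∃ l, Alt H M true v l

lemma ev_od_disjoint (hg : ∀ e ∈ H.E, e.card ≤ 2) (hM : H.IsMaxVMatching M)
    (hME : ∀ m ∈ M, m ∈ H.E)
    (hbip : ¬ ∃ (l : ℕ) (v : ℕ → α) (e : ℕ → Finset α), H.IsCycle l v e ∧ Odd l)
    {v : α} (h1 : Ev H M v) (h2 : Od H M v) : False := by
  obtain ⟨l1, h1⟩ := h1
  obtain ⟨l2, h2⟩ := h2
  exact opp hg hM hME hbip h1.toWalk h2.toWalk

lemma Alt.mem_V (hME : ∀ m ∈ M, m ∈ H.E) : ∀ {b v l}, Alt H M b v l → v ∈ H.V := by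
  intro b v l h
  cases h with
  | base h => exact h.1
  | odd _ he _ hq _ _ => exact H.edge_subset _ he hq
  | even _ hm _ hr _ _ => exact H.edge_subset _ (hME _ hm) hr

lemma ev_in_D (hg : ∀ e ∈ H.E, e.card ≤ 2) (hM : H.IsMaxVMatching M)
    (hME : ∀ m ∈ M, m ∈ H.E) {v : α} (h : Ev H M v) : v ∈ H.setD := by
  obtain ⟨l, h⟩ := h
  obtain ⟨M', hM'max, hM'v, -, -⟩ := flip hg hM h
  exact ⟨h.mem_V hME, M', hM'max, hM'v⟩

lemma no_loop_ev (hg : ∀ e ∈ H.E, e.card ≤ 2) (hM : H.IsMaxVMatching M)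
    {a : α} (h : Ev H M a) {e : Finset α} (he : e ∈ H.E) (ha : a ∈ e)
    (hloop : ∀ w ∈ e, w = a) : False := by
  obtain ⟨l, h⟩ := h
  obtain ⟨M', hM'max, hM'v, -, -⟩ := flip hg hM h
  have he' : e ∉ M' := fun h' => hM'v e h' ha
  have hmatch : H.IsMatching (insert e M') := by
    constructor
    · intro f hf
      rcases Finset.mem_insert.mp hf with rfl | hf
      · exact he
      · exact hM'max.1.1 hf
    · intro f hf g hg' hfg
      have hdisj : ∀ g' ∈ M', Disjoint e g' := by
        intro g' hg''
        rw [Finset.disjoint_left]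
        intro w hw hw'
        rw [hloop w hw] at hw'
        exact hM'v g' hg'' hw'
      rcases Finset.mem_insert.mp hf with rfl | hf'
      · rcases Finset.mem_insert.mp hg' with rfl | hg''
        · exact absurd rfl hfg
        · exact hdisj g hg''
      · rcases Finset.mem_insert.mp hg' with rfl | hg''
        · exact (hdisj f hf').symm
        · exact hM'max.1.2 f hf' g hg'' hfg
  have hsum : ∑ f ∈ insert e M', f.card = ∑ f ∈ M, f.card + e.card := by
    rw [Finset.sum_insert he', max_sum_eq hM'max hM]; omega
  have hcardpos : 1 ≤ e.card := Finset.card_pos.mpr ⟨a, ha⟩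
  have := hM.2 _ hmatch
  omega

lemma Alt.suffix : ∀ {b v L}, Alt H M b v L → ∀ w ∈ L,
    ∃ b' l', Alt H M b' w (w :: l') ∧ (w :: l') <:+ L := by
  intro b v L h
  induction h with
  | @base v h =>
      intro w hw
      rw [List.mem_singleton] at hw
      subst hw
      exact ⟨false, [], Alt.base h, List.suffix_rfl⟩
  | @odd p l e q hp he hpe hqe hqp hql ih =>
      intro w hw
      rcases List.mem_cons.mp hw with rfl | hw
      · exact ⟨true, l, Alt.odd hp he hpe hqe hqp hql, List.suffix_rfl⟩
      · obtain ⟨b', l', h', hsuf⟩ := ih w hw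
        exact ⟨b', l', h', hsuf.trans (List.suffix_cons _ _)⟩
  | @even q l m r hq hm hqm hrm hrq hrl ih =>
      intro w hw
      rcases List.mem_cons.mp hw with rfl | hw
      · exact ⟨false, l, Alt.even hq hm hqm hrm hrq hrl, List.suffix_rfl⟩
      · obtain ⟨b', l', h', hsuf⟩ := ih w hw
        exact ⟨b', l', h', hsuf.trans (List.suffix_cons _ _)⟩

/-- A neighbour of an evenly reachable vertex is oddly reachable. -/
lemma ev_adj (hg : ∀ e ∈ H.E, e.card ≤ 2) (hM : H.IsMaxVMatching M)
    (hME : ∀ m ∈ M, m ∈ H.E)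
    (hbip : ¬ ∃ (l : ℕ) (v : ℕ → α) (e : ℕ → Finset α), H.IsCycle l v e ∧ Odd l)
    {a b : α} (hEv : Ev H M a) {e : Finset α} (he : e ∈ H.E) (ha : a ∈ e) (hb : b ∈ e)
    (hba : b ≠ a) : Od H M b := by
  obtain ⟨l, hAlt⟩ := hEv
  by_cases hbl : b ∈ l
  · obtain ⟨b', l', h', hsuf⟩ := hAlt.suffix b hbl
    rcases b' with _ | _
    · -- both even: odd cycle through the chord
      exfalso
      obtain ⟨T, hT⟩ := hsuf
      obtain ⟨t, hl⟩ := hAlt.head'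
      rcases T with _ | ⟨a', T'⟩
      · exfalso
        have h0 : b :: l' = a :: t := by rw [← hl]; simpa using hT
        exact hba (List.cons_eq_cons.mp h0).1
      have ha' : a' = a := by
        have h0 : a' :: (T' ++ b :: l') = a :: t := by rw [← hl]; simpa using hT
        exact (List.cons_eq_cons.mp h0).1
      subst ha'
      have hchain : List.Chain' (Adj H) l := hAlt.toWalk.chain' hME
      have hchain' : List.Chain' (Adj H) ((a' :: T') ++ b :: l') := by rw [hT]; exact hchain
      have hsplit := (List.isChain_split (l₁ := a' :: T') (c := b) (l₂ := l')).mp hchain'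
      have hP : List.Chain' (Adj H) ((a' :: T') ++ [b]) := hsplit.1
      have hCL : List.Chain' (Adj H) (b :: (a' :: T') ++ [b]) := by
        simp only [List.cons_append]
        exact List.isChain_cons_cons.mpr ⟨⟨hba, e, he, hb, ha⟩, by simpa [List.Chain'] using hP⟩
      have hl1 : l.length % 2 = 1 := hAlt.toWalk.parity_false
      have hl2 : (b :: l').length % 2 = 1 := h'.toWalk.parity_false
      have hTlen : l.length = T'.length + 1 + (l'.length + 1) := by
        rw [← hT]; simp only [List.length_append, List.length_cons]; try omega
      refine oc H hbip ((a' :: T').length) (a' :: T') b le_rfl hCL ?_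
      simp only [List.length_cons] at *
      omega
    · exact ⟨_, h'⟩
  · exact ⟨_, Alt.odd hAlt he ha hb hba hbl⟩

/-- Every non-head vertex of an alternating path is even or matched to a vertex above it. -/
lemma Alt.mem_struct : ∀ {b v L}, Alt H M b v L → ∀ w ∈ L, w ≠ v →
    Ev H M w ∨ ∃ m' ∈ M, w ∈ m' ∧ ∃ up ∈ m', up ≠ w ∧ up ∈ L := by
  intro b v L h
  induction h with
  | @base v h =>
      intro w hw hwv
      rw [List.mem_singleton] at hw
      exact absurd hw hwv
  | @odd p l e q hp he hpe hqe hqp hql ih =>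
      intro w hw hwq
      rcases List.mem_cons.mp hw with rfl | hw
      · exact absurd rfl hwq
      · by_cases hwp : w = p
        · subst hwp
          exact Or.inl ⟨l, hp⟩
        · rcases ih w hw hwp with h' | ⟨m', hm', hwm', up, hupm', hupw, hupl⟩
          · exact Or.inl h'
          · exact Or.inr ⟨m', hm', hwm', up, hupm', hupw, List.mem_cons_of_mem _ hupl⟩
  | @even q l m r hq hm hqm hrm hrq hrl ih =>
      intro w hw hwr
      rcases List.mem_cons.mp hw with rfl | hw
      · exact absurd rfl hwr
      · by_cases hwq : w = q
        · subst hwq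
          exact Or.inr ⟨m, hm, hqm, r, hrm, hrq, List.mem_cons_self⟩
        · rcases ih w hw hwq with h' | ⟨m', hm', hwm', up, hupm', hupw, hupl⟩
          · exact Or.inl h'
          · exact Or.inr ⟨m', hm', hwm', up, hupm', hupw, List.mem_cons_of_mem _ hupl⟩

/-- An oddly reachable vertex is matched, by a pair whose other vertex is evenly reachable. -/
lemma od_partner (hg : ∀ e ∈ H.E, e.card ≤ 2) (hM : H.IsMaxVMatching M)
    {o : α} (h : Od H M o) :
    ∃ m ∈ M, o ∈ m ∧ ∃ r ∈ m, r ≠ o ∧ Ev H M r := by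
  obtain ⟨L, hAlt⟩ := h
  cases hAlt with
  | @odd p l e _ hp he hpe hoe hop hol =>
    -- o is matched
    have hoV : o ∈ H.V := H.edge_subset _ he hoe
    obtain ⟨m, hm, hom⟩ : ∃ m ∈ M, o ∈ m := by
      by_contra hc
      push_neg at hc
      exact not_exp_odd hg hM (Alt.odd hp he hpe hoe hop hol) ⟨hoV, hc⟩
    -- the matching edge is not a loop
    have hnl : ∃ r ∈ m, r ≠ o := by
      by_contra hc
      push_neg at hc
      obtain ⟨M', hM'max, hM'p, hpres, hsub⟩ := flip hg hM hp
      have hmM' : m ∈ M' := hpres m hm (fun w hw => (hc w hw) ▸ hol)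
      have hepair : e = {p, o} := pair_eq hg he hpe hoe (fun h' => hop h'.symm)
      have hmcard : m.card = 1 := by
        rw [Finset.card_eq_one]
        exact ⟨o, Finset.eq_singleton_iff_unique_mem.mpr ⟨hom, hc⟩⟩
      have heM'' : e ∉ M'.erase m := by
        intro h'
        exact hM'p e (Finset.mem_of_mem_erase h') hpe
      have hmatch : H.IsMatching (insert e (M'.erase m)) := by
        constructor
        · intro f hf
          rcases Finset.mem_insert.mp hf with rfl | hf
          · exact he
          · exact hM'max.1.1 (Finset.mem_of_mem_erase hf)
        · intro f hf g hg' hfg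
          have hdisj : ∀ g' ∈ M'.erase m, Disjoint e g' := by
            intro g' hg''
            rw [hepair, Finset.disjoint_left]
            intro w hw hw'
            simp only [Finset.mem_insert, Finset.mem_singleton] at hw
            rcases hw with rfl | rfl
            · exact hM'p g' (Finset.mem_of_mem_erase hg'') hw'
            · exact (Finset.mem_erase.mp hg'').1
                (match_unique hM'max.1 (Finset.mem_of_mem_erase hg'') hmM' hw' hom)
          rcases Finset.mem_insert.mp hf with rfl | hf'
          · rcases Finset.mem_insert.mp hg' with rfl | hg''
            · exact absurd rfl hfg
            · exact hdisj g hg''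
          · rcases Finset.mem_insert.mp hg' with rfl | hg''
            · exact (hdisj f hf').symm
            · exact hM'max.1.2 f (Finset.mem_of_mem_erase hf') g
                (Finset.mem_of_mem_erase hg'') hfg
      have hsum : ∑ f ∈ insert e (M'.erase m), f.card = ∑ f ∈ M, f.card + 1 := by
        rw [Finset.sum_insert heM'']
        have h2 : m.card + ∑ f ∈ M'.erase m, f.card = ∑ f ∈ M', f.card :=
          Finset.add_sum_erase M' _ hmM'
        have h3 : ∑ f ∈ M', f.card = ∑ f ∈ M, f.card := max_sum_eq hM'max hM
        have hec : e.card = 2 := by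
          rw [hepair]; exact Finset.card_pair (fun h' => hop h'.symm)
        omega
      have := hM.2 _ hmatch
      omega
    obtain ⟨r, hrm, hro⟩ := hnl
    refine ⟨m, hm, hom, r, hrm, hro, ?_⟩
    -- r is evenly reachable
    by_cases hrL : r ∈ o :: l
    · rcases List.mem_cons.mp hrL with rfl | hrl
      · exact absurd rfl hro
      · obtain ⟨t, hlt⟩ := hp.head'
        by_cases hrp : r = p
        · exact hrp ▸ ⟨l, hp⟩
        · rcases hp.mem_struct r hrl hrp with h' | ⟨m', hm', hrm', up, hupm', hupr, hupl⟩
          · exact h'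
          · exfalso
            have hmm' : m' = m := match_unique hM.1 hm' hm hrm' hrm
            rw [hmm'] at hupm'
            have hmpair : m = {o, r} := pair_eq hg (hM.1.1 hm) hom hrm (fun h' => hro h'.symm)
            rw [hmpair] at hupm'
            simp only [Finset.mem_insert, Finset.mem_singleton] at hupm'
            rcases hupm' with rfl | rfl
            · exact hol hupl
            · exact hupr rfl
    · exact ⟨r :: o :: l, Alt.even (Alt.odd hp he hpe hoe hop hol) hm hom hrm hro hrL⟩


lemma weak_duality {y : α → ℕ} {M' : Finset (Finset α)}
    (hm : H.IsMatching M') (hy : H.IsVCover y) :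
    ∑ m ∈ M', m.card ≤ ∑ v ∈ H.V, y v := by
  calc ∑ m ∈ M', m.card ≤ ∑ m ∈ M', ∑ v ∈ m, y v :=
        Finset.sum_le_sum (fun m hm' => hy m (hm.1 hm'))
  _ = ∑ v ∈ M'.biUnion id, y v := by
        refine (Finset.sum_biUnion ?_).symm
        intro a ha b hb hab
        exact hm.2 a ha b hb hab
  _ ≤ ∑ v ∈ H.V, y v := by
        refine Finset.sum_le_sum_of_subset ?_
        intro v hv
        obtain ⟨m, hm', hvm⟩ := Finset.mem_biUnion.mp hv
        exact H.edge_subset m (hm.1 hm') hvm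

lemma weak_duality_erase {y : α → ℕ} {M' : Finset (Finset α)} {u : α}
    (hm : H.IsMatching M') (hy : H.IsVCover y) (hu : ∀ m ∈ M', u ∉ m) :
    ∑ m ∈ M', m.card ≤ ∑ v ∈ H.V.erase u, y v := by
  calc ∑ m ∈ M', m.card ≤ ∑ m ∈ M', ∑ v ∈ m, y v :=
        Finset.sum_le_sum (fun m hm' => hy m (hm.1 hm'))
  _ = ∑ v ∈ M'.biUnion id, y v := by
        refine (Finset.sum_biUnion ?_).symm
        intro a ha b hb hab
        exact hm.2 a ha b hb hab
  _ ≤ ∑ v ∈ H.V.erase u, y v := by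
        refine Finset.sum_le_sum_of_subset ?_
        intro v hv
        obtain ⟨m, hm', hvm⟩ := Finset.mem_biUnion.mp hv
        have hvm' : v ∈ m := hvm
        refine Finset.mem_erase.mpr ⟨fun h => hu m hm' (h ▸ hvm'), H.edge_subset m (hm.1 hm') hvm'⟩

end GEAux
/-- for a bipartite graph (all edges of cardinality at most two and no odd
cycle), `A_H = P_H` and `C_H = M_H`. -/
theorem bipartite_decompositions_eq {α : Type*} [DecidableEq α] (H : Hypergraph' α)
    (hgraph : ∀ e ∈ H.E, e.card ≤ 2)
    (hbip : ¬ ∃ (l : ℕ) (v : ℕ → α) (e : ℕ → Finset α), H.IsCycle l v e ∧ Odd l) :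
    H.setA = H.setP ∧ H.setC = H.setM := by
  classical
  open GEAux in
  obtain ⟨M₁, hM₁⟩ := exists_maxVMatching H
  have hME : ∀ m ∈ M₁, m ∈ H.E := fun m hm => hM₁.1.1 hm
  set x : α → ℕ := fun v => if Ev H M₁ v then 0 else if Od H M₁ v then 2 else 1 with hx
  -- x is a V-vertex cover
  have hxcov : H.IsVCover x := by
    intro e he
    show e.card ≤ ∑ u ∈ e, x u
    have hc2 : e.card ≤ 2 := hgraph e he
    have hc1 : 1 ≤ e.card := Finset.card_pos.mpr (H.edge_nonempty e he)
    by_cases h1 : e.card = 1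
    · obtain ⟨a, rfl⟩ := Finset.card_eq_one.mp h1
      rw [Finset.sum_singleton, h1]
      by_cases hEa : Ev H M₁ a
      · exact absurd (no_loop_ev hgraph hM₁ hEa he (Finset.mem_singleton_self a)
          (fun w hw => Finset.mem_singleton.mp hw)) (fun h => h)
      · simp only [hx]
        rw [if_neg hEa]
        split <;> omega
    · have h2 : e.card = 2 := by omega
      obtain ⟨a, b, hab, rfl⟩ := Finset.card_eq_two.mp h2
      rw [Finset.sum_pair hab, h2]
      have hma : a ∈ ({a, b} : Finset α) := Finset.mem_insert_self _ _
      have hmb : b ∈ ({a, b} : Finset α) := Finset.mem_insert_of_mem (Finset.mem_singleton_self _)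
      by_cases hEa : Ev H M₁ a
      · have hOb : Od H M₁ b := ev_adj hgraph hM₁ hME hbip hEa he hma hmb (Ne.symm hab)
        have hEb : ¬ Ev H M₁ b := fun h => ev_od_disjoint hgraph hM₁ hME hbip h hOb
        have : x b = 2 := by simp only [hx]; rw [if_neg hEb, if_pos hOb]
        omega
      · by_cases hEb : Ev H M₁ b
        · have hOa : Od H M₁ a := ev_adj hgraph hM₁ hME hbip hEb he hmb hma hab
          have hEa' : ¬ Ev H M₁ a := hEa
          have : x a = 2 := by simp only [hx]; rw [if_neg hEa', if_pos hOa]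
          omega
        · have hxa : 1 ≤ x a := by simp only [hx]; rw [if_neg hEa]; split <;> omega
          have hxb : 1 ≤ x b := by simp only [hx]; rw [if_neg hEb]; split <;> omega
          omega
  -- counting: the weight of x is at most the size of the maximum matching
  have hcount : ∑ v ∈ H.V, x v ≤ ∑ m ∈ M₁, m.card := by
    set cov : Finset α := M₁.biUnion id with hcov
    have hcovcard : cov.card = ∑ m ∈ M₁, m.card := Finset.card_biUnion hM₁.1.2
    set Bf : Finset α := H.V.filter (fun v => ¬ Ev H M₁ v ∧ Od H M₁ v) with hBf
    set Rf : Finset α := H.V.filter (fun v => ¬ Ev H M₁ v ∧ ¬ Od H M₁ v) with hRf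
    have hsum : ∑ v ∈ H.V, x v = 2 * Bf.card + Rf.card := by
      rw [← Finset.sum_filter_add_sum_filter_not H.V (fun v => Ev H M₁ v) x]
      have h0 : ∑ v ∈ H.V.filter (fun v => Ev H M₁ v), x v = 0 := by
        refine Finset.sum_eq_zero ?_
        intro v hv
        simp only [hx]
        rw [if_pos (Finset.mem_filter.mp hv).2]
      rw [h0, zero_add]
      rw [← Finset.sum_filter_add_sum_filter_not
        (H.V.filter (fun v => ¬ Ev H M₁ v)) (fun v => Od H M₁ v) x]
      rw [Finset.filter_filter, Finset.filter_filter]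
      have hB2 : ∑ v ∈ H.V.filter (fun v => ¬ Ev H M₁ v ∧ Od H M₁ v), x v = 2 * Bf.card := by
        rw [Finset.sum_congr rfl (g := fun _ => 2) ?_]
        · rw [Finset.sum_const, smul_eq_mul, mul_comm, hBf]
        · intro v hv
          obtain ⟨-, hnE, hO⟩ := Finset.mem_filter.mp hv
          simp only [hx]
          rw [if_neg hnE, if_pos hO]
      have hR1 : ∑ v ∈ H.V.filter (fun v => ¬ Ev H M₁ v ∧ ¬ Od H M₁ v), x v = Rf.card := by
        rw [Finset.sum_congr rfl (g := fun _ => 1) ?_]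
        · rw [Finset.sum_const, smul_eq_mul, mul_one, hRf]
        · intro v hv
          obtain ⟨-, hnE, hnO⟩ := Finset.mem_filter.mp hv
          simp only [hx]
          rw [if_neg hnE, if_neg hnO]
      rw [hB2, hR1]
    have hexP : ∀ o ∈ Bf, ∃ r, ∃ m ∈ M₁, o ∈ m ∧ r ∈ m ∧ r ≠ o ∧ Ev H M₁ r := by
      intro o ho
      obtain ⟨m, hm, hom, r, hrm, hro, hEr⟩ :=
        od_partner hgraph hM₁ (Finset.mem_filter.mp ho).2.2
      exact ⟨r, m, hm, hom, hrm, hro, hEr⟩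
    set f : α → α := fun o =>
      if h : ∃ r, ∃ m ∈ M₁, o ∈ m ∧ r ∈ m ∧ r ≠ o ∧ Ev H M₁ r then h.choose else o with hf
    have hfP : ∀ o ∈ Bf, ∃ m ∈ M₁, o ∈ m ∧ f o ∈ m ∧ f o ≠ o ∧ Ev H M₁ (f o) := by
      intro o ho
      have h := hexP o ho
      simp only [hf, dif_pos h]
      exact h.choose_spec
    have hnEv_cov : ∀ v ∈ H.V, ¬ Ev H M₁ v → v ∈ cov := by
      intro v hv hnE
      by_contra hc
      refine hnE ⟨[v], Alt.base ⟨hv, ?_⟩⟩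
      intro m hm hvm
      exact hc (Finset.mem_biUnion.mpr ⟨m, hm, hvm⟩)
    set If : Finset α := Bf.image f with hIf
    have hIfcard : If.card = Bf.card := by
      refine Finset.card_image_of_injOn ?_
      intro o ho o' ho' hfo
      have hoB := Finset.mem_coe.mp ho
      have ho'B := Finset.mem_coe.mp ho'
      obtain ⟨m, hm, hom, hfom, hfno, hEf⟩ := hfP o hoB
      obtain ⟨m', hm', hom', hfom', hfno', hEf'⟩ := hfP o' ho'B
      have hfom2 : f o ∈ m' := by rw [hfo]; exact hfom'
      have hmm : m = m' := match_unique hM₁.1 hm hm' hfom hfom2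
      have hpair : m = {o, f o} := pair_eq hgraph (hME m hm) hom hfom hfno.symm
      have ho'm : o' ∈ m := by rw [hmm]; exact hom'
      rw [hpair] at ho'm
      simp only [Finset.mem_insert, Finset.mem_singleton] at ho'm
      rcases ho'm with h' | h'
      · exact h'.symm
      · exfalso
        have : Ev H M₁ o' := by rw [h']; exact hEf
        exact (Finset.mem_filter.mp ho'B).2.1 this
    have hsub : Bf ∪ Rf ∪ If ⊆ cov := by
      intro v hv
      rcases Finset.mem_union.mp hv with hv' | hv'
      · rcases Finset.mem_union.mp hv' with hv'' | hv''
        · exact hnEv_cov v (Finset.mem_filter.mp hv'').1 (Finset.mem_filter.mp hv'').2.1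
        · exact hnEv_cov v (Finset.mem_filter.mp hv'').1 (Finset.mem_filter.mp hv'').2.1
      · obtain ⟨o, ho, rfl⟩ := Finset.mem_image.mp hv'
        obtain ⟨m, hm, -, hfom, -, -⟩ := hfP o ho
        exact Finset.mem_biUnion.mpr ⟨m, hm, hfom⟩
    have hd1 : Disjoint Bf Rf := by
      rw [Finset.disjoint_left]
      intro v hv hv'
      exact (Finset.mem_filter.mp hv').2.2 (Finset.mem_filter.mp hv).2.2
    have hd2 : Disjoint (Bf ∪ Rf) If := by
      rw [Finset.disjoint_left]
      intro v hv hv'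
      obtain ⟨o, ho, rfl⟩ := Finset.mem_image.mp hv'
      obtain ⟨-, -, -, -, -, hEf⟩ := hfP o ho
      rcases Finset.mem_union.mp hv with hv'' | hv''
      · exact (Finset.mem_filter.mp hv'').2.1 hEf
      · exact (Finset.mem_filter.mp hv'').2.1 hEf
    have hcard : (Bf ∪ Rf ∪ If).card = Bf.card + Rf.card + If.card := by
      rw [Finset.card_union_of_disjoint hd2, Finset.card_union_of_disjoint hd1]
    have := Finset.card_le_card hsub
    omega
  have hxmin : H.IsMinVCover x :=
    ⟨hxcov, fun y hy => le_trans hcount (weak_duality hM₁.1 hy)⟩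
  have hxsum : ∑ v ∈ H.V, x v = ∑ m ∈ M₁, m.card :=
    le_antisymm hcount (weak_duality hM₁.1 hxcov)
  -- complementary slackness: vertices of D get weight 0 in every minimum cover
  have hslack : ∀ u ∈ H.setD, ∀ y, H.IsMinVCover y → y u = 0 := by
    intro u hu y hy
    obtain ⟨huV, Mu, hMu, hmiss⟩ := hu
    have h1 : ∑ m ∈ Mu, m.card = ∑ m ∈ M₁, m.card := max_sum_eq hMu hM₁
    have h2 : ∑ m ∈ Mu, m.card ≤ ∑ v ∈ H.V.erase u, y v :=
      weak_duality_erase hMu.1 hy.1 hmiss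
    have h3 : ∑ v ∈ H.V, y v = ∑ v ∈ H.V, x v :=
      le_antisymm (hy.2 x hxcov) (hxmin.2 y hy.1)
    have h4 : y u + ∑ v ∈ H.V.erase u, y v = ∑ v ∈ H.V, y v :=
      Finset.add_sum_erase _ y huV
    omega
  have hAP : H.setA = H.setP := by
    ext v
    constructor
    · rintro ⟨hvV, hvD, e, he, hve, u, huD, hue⟩
      refine ⟨hvV, ?_⟩
      intro y hy
      have hyu : y u = 0 := hslack u huD y hy
      have huv : u ≠ v := fun h => hvD (h ▸ huD)
      have hepair : e = {u, v} := pair_eq hgraph he hue hve huv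
      have h5 : e.card ≤ ∑ w ∈ e, y w := hy.1 e he
      have hcard2 : e.card = 2 := by rw [hepair]; exact Finset.card_pair huv
      have hsum2 : ∑ w ∈ e, y w = y u + y v := by rw [hepair]; exact Finset.sum_pair huv
      omega
    · rintro ⟨hvV, hvP⟩
      have h2 : 2 ≤ x v := hvP x hxmin
      have hOd : Od H M₁ v ∧ ¬ Ev H M₁ v := by
        by_cases hE : Ev H M₁ v
        · exfalso; simp only [hx] at h2; rw [if_pos hE] at h2; omega
        · by_cases hO : Od H M₁ v
          · exact ⟨hO, hE⟩
          · exfalso; simp only [hx] at h2; rw [if_neg hE, if_neg hO] at h2; omega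
      have hvD : v ∉ H.setD := by
        intro hD
        have := hslack v hD x hxmin
        omega
      obtain ⟨m, hm, hvm, r, hrm, hrv, hEr⟩ := od_partner hgraph hM₁ hOd.1
      exact ⟨hvV, hvD, m, hME m hm, hvm, r, ev_in_D hgraph hM₁ hME hEr, hrm⟩
  refine ⟨hAP, ?_⟩
  ext v
  constructor
  · rintro ⟨hvV, hvA, hvD⟩
    exact ⟨hvV, hvD, hAP ▸ hvA⟩
  · rintro ⟨hvV, hvD, hvP⟩
    exact ⟨hvV, hAP ▸ hvP, hvD⟩
end

section
/- Let H=(V,E) be a balanced hypergraph. Then ⋎_E(H) = ⋎_E(H∖v) for every v ∈ F_H and for every v ∈ N_H. -/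
open Finset

/-- A hypergraph: a finite vertex set `V` and a finite collection `E` of nonempty
subsets of `V` whose union is `V`. -/
structure FinsetHypergraph (α : Type*) [DecidableEq α] where
  V : Finset α
  E : Finset (Finset α)
  edge_nonempty : ∀ e ∈ E, e.Nonempty
  edge_subset : ∀ e ∈ E, e ⊆ V
  vertex_mem : ∀ v ∈ V, ∃ e ∈ E, v ∈ e

namespace FinsetHypergraph

variable {α : Type*} [DecidableEq α]

/-- A cycle of length `l`: a sequence `v 0, e 1, v 1, e 2, …, e l, v l` with
`v (i-1), v i ∈ e i`, the vertices `v 0, …, v (l-1)` pairwise distinct and `v l = v 0`. -/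
def IsCycle (H : FinsetHypergraph α) (l : ℕ) (v : ℕ → α) (e : ℕ → Finset α) : Prop :=
  2 ≤ l ∧ (∀ i, 1 ≤ i → i ≤ l → e i ∈ H.E ∧ v (i - 1) ∈ e i ∧ v i ∈ e i) ∧
    (∀ i j, i < l → j < l → v i = v j → i = j) ∧ v l = v 0

/-- A strong cycle: no edge of the cycle contains three vertices of the cycle. -/
def IsStrongCycle (H : FinsetHypergraph α) (l : ℕ) (v : ℕ → α) (e : ℕ → Finset α) : Prop :=
  H.IsCycle l v e ∧ ∀ i, 1 ≤ i → i ≤ l → (e i ∩ (Finset.range l).image v).card ≤ 2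

/-- A hypergraph is balanced if it has no strong cycle of odd length. -/
def Balanced (H : FinsetHypergraph α) : Prop :=
  ¬ ∃ (l : ℕ) (v : ℕ → α) (e : ℕ → Finset α), H.IsStrongCycle l v e ∧ Odd l

/-- A matching: a set of pairwise disjoint edges. -/
def IsMatching (H : FinsetHypergraph α) (M : Finset (Finset α)) : Prop :=
  M ⊆ H.E ∧ ∀ e ∈ M, ∀ f ∈ M, e ≠ f → Disjoint e f

/-- The `d`-matching number `⋎_d(H)`: the maximum of `∑ m ∈ M, d m` over matchings `M`. -/
noncomputable def nuW (H : FinsetHypergraph α) (d : Finset α → ℕ) : ℕ :=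
  sSup ((fun M => ∑ m ∈ M, d m) '' {M | H.IsMatching M})

/-- The matching number `⋎_E(H)`: the maximum number of edges of a matching. -/
noncomputable def nuE (H : FinsetHypergraph α) : ℕ :=
  sSup ((fun M : Finset (Finset α) => M.card) '' {M | H.IsMatching M})

/-- The matching number `⋎_V(H)`: the maximum number of vertices covered by a matching. -/
noncomputable def nuV (H : FinsetHypergraph α) : ℕ :=
  sSup ((fun M : Finset (Finset α) => ∑ m ∈ M, m.card) '' {M | H.IsMatching M})

/-- A `d`-vertex cover: `x : α → ℕ` with `∑_{u ∈ e} x u ≥ d e` for every edge `e`. -/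
def IsCover (H : FinsetHypergraph α) (d : Finset α → ℕ) (x : α → ℕ) : Prop :=
  ∀ e ∈ H.E, d e ≤ ∑ u ∈ e, x u

/-- The `d`-vertex cover number `τ_d(H)`. -/
noncomputable def tauW (H : FinsetHypergraph α) (d : Finset α → ℕ) : ℕ :=
  sInf ((fun x : α → ℕ => ∑ u ∈ H.V, x u) '' {x | H.IsCover d x})

/-- An `E`-vertex cover: every edge gets total weight at least `1`. -/
def IsECover (H : FinsetHypergraph α) (x : α → ℕ) : Prop :=
  H.IsCover (fun _ => 1) x

/-- A `V`-vertex cover: every edge `e` gets total weight at least `|e|`. -/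
def IsVCover (H : FinsetHypergraph α) (x : α → ℕ) : Prop :=
  H.IsCover (fun e => e.card) x

/-- The `E`-vertex cover number `τ_E(H)`. -/
noncomputable def tauE (H : FinsetHypergraph α) : ℕ := H.tauW (fun _ => 1)

/-- The `V`-vertex cover number `τ_V(H)`. -/
noncomputable def tauV (H : FinsetHypergraph α) : ℕ := H.tauW (fun e => e.card)

/-- A `V`-maximum matching: maximizes the number of covered vertices. -/
def IsMaxVMatching (H : FinsetHypergraph α) (M : Finset (Finset α)) : Prop :=
  H.IsMatching M ∧ ∀ M', H.IsMatching M' → ∑ m ∈ M', m.card ≤ ∑ m ∈ M, m.card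

/-- An `E`-maximum matching: maximizes the number of edges. -/
def IsMaxEMatching (H : FinsetHypergraph α) (M : Finset (Finset α)) : Prop :=
  H.IsMatching M ∧ ∀ M', H.IsMatching M' → M'.card ≤ M.card

/-- A minimum `V`-vertex cover. -/
def IsMinVCover (H : FinsetHypergraph α) (x : α → ℕ) : Prop :=
  H.IsVCover x ∧ ∀ y, H.IsVCover y → ∑ u ∈ H.V, x u ≤ ∑ u ∈ H.V, y u

/-- A minimum `E`-vertex cover. -/
def IsMinECover (H : FinsetHypergraph α) (x : α → ℕ) : Prop :=
  H.IsECover x ∧ ∀ y, H.IsECover y → ∑ u ∈ H.V, x u ≤ ∑ u ∈ H.V, y u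

/-- The hypergraph `H ∖ v = (V ∖ {v}, {e ∖ {v} : e ∈ E, e ∖ {v} ≠ ∅})`. -/
def delV (H : FinsetHypergraph α) (v : α) : FinsetHypergraph α where
  V := H.V.erase v
  E := (H.E.image fun e => e.erase v).filter fun e => e.Nonempty
  edge_nonempty := fun e he => (Finset.mem_filter.mp he).2
  edge_subset := by
    intro e he
    obtain ⟨f, hf, rfl⟩ := Finset.mem_image.mp (Finset.mem_filter.mp he).1
    exact Finset.erase_subset_erase v (H.edge_subset f hf)
  vertex_mem := by
    intro u hu
    obtain ⟨hne, huV⟩ := Finset.mem_erase.mp hu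
    obtain ⟨e, he, hue⟩ := H.vertex_mem u huV
    exact ⟨e.erase v,
      Finset.mem_filter.mpr ⟨Finset.mem_image_of_mem _ he,
        ⟨u, Finset.mem_erase.mpr ⟨hne, hue⟩⟩⟩,
      Finset.mem_erase.mpr ⟨hne, hue⟩⟩

/-- `D_H`: vertices not covered by at least one `V`-maximum matching. -/
def setD (H : FinsetHypergraph α) : Set α :=
  {v | v ∈ H.V ∧ ∃ M, H.IsMaxVMatching M ∧ ∀ m ∈ M, v ∉ m}

/-- `P_H`: vertices having weight at least `2` in every minimum `V`-vertex cover. -/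
def setP (H : FinsetHypergraph α) : Set α :=
  {v | v ∈ H.V ∧ ∀ x, H.IsMinVCover x → 2 ≤ x v}

/-- `M_H = V ∖ (D_H ∪ P_H)`. -/
def setM (H : FinsetHypergraph α) : Set α :=
  {v | v ∈ H.V ∧ v ∉ H.setD ∧ v ∉ H.setP}

/-- `A_H`: vertices outside `D_H` lying in a common edge with some vertex of `D_H`. -/
def setA (H : FinsetHypergraph α) : Set α :=
  {v | v ∈ H.V ∧ v ∉ H.setD ∧ ∃ e ∈ H.E, v ∈ e ∧ ∃ u ∈ H.setD, u ∈ e}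

/-- `C_H = V ∖ (A_H ∪ D_H)`. -/
def setC (H : FinsetHypergraph α) : Set α :=
  {v | v ∈ H.V ∧ v ∉ H.setA ∧ v ∉ H.setD}

/-- `F_H`: vertices not covered by at least one `E`-maximum matching. -/
def setF (H : FinsetHypergraph α) : Set α :=
  {v | v ∈ H.V ∧ ∃ M, H.IsMaxEMatching M ∧ ∀ m ∈ M, v ∉ m}

/-- `Q_H`: vertices having weight exactly `1` in every minimum `E`-vertex cover. -/
def setQ (H : FinsetHypergraph α) : Set α :=
  {v | v ∈ H.V ∧ ∀ x, H.IsMinECover x → x v = 1}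

/-- `N_H = V ∖ (Q_H ∪ F_H)`. -/
def setN (H : FinsetHypergraph α) : Set α :=
  {v | v ∈ H.V ∧ v ∉ H.setQ ∧ v ∉ H.setF}

/-- Degree of a vertex. -/
def degree (H : FinsetHypergraph α) (v : α) : ℕ := (H.E.filter fun e => v ∈ e).card

/-- Maximum degree `Δ(H)`. -/
def maxDegree (H : FinsetHypergraph α) : ℕ := H.V.sup H.degree

/-- Factor critical: `H ∖ v` has a perfect matching for every vertex `v`. -/
def FactorCritical (H : FinsetHypergraph α) : Prop :=
  ∀ v ∈ H.V, ∃ M, (H.delV v).IsMatching M ∧ ∀ u ∈ (H.delV v).V, ∃ m ∈ M, u ∈ m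

/-- A stable set: no subset of size at least two is contained in an edge. -/
def IsStable (H : FinsetHypergraph α) (S : Finset α) : Prop :=
  S ⊆ H.V ∧ ∀ T ⊆ S, 2 ≤ T.card → ∀ e ∈ H.E, ¬ T ⊆ e

/-- A maximum weight stable set with regard to the weight function `d`. -/
def IsMaxWeightStable (H : FinsetHypergraph α) (d : α → ℕ) (S : Finset α) : Prop :=
  H.IsStable S ∧ ∀ T, H.IsStable T → ∑ u ∈ T, d u ≤ ∑ u ∈ S, d u

/-- `K` is the subhypergraph of `H` induced by some vertex set `W`. -/
def IsSubhypergraph (H K : FinsetHypergraph α) : Prop :=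
  ∃ W : Finset α, W ⊆ H.V ∧ K.V = W ∧
    K.E = (H.E.image fun e => e ∩ W).filter fun e => e.Nonempty

/-- `K` is a partial hypergraph of `H`: generated by a subset of the edges of `H`. -/
def IsPartialHypergraph (H K : FinsetHypergraph α) : Prop := K.E ⊆ H.E

/-- `K` is a partial subhypergraph of `H`: a partial hypergraph of a subhypergraph
of `H`, or a subhypergraph of a partial hypergraph of `H`. -/
def IsPartialSubhypergraph (H K : FinsetHypergraph α) : Prop :=
  (∃ G : FinsetHypergraph α, H.IsSubhypergraph G ∧ G.IsPartialHypergraph K) ∨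
  (∃ G : FinsetHypergraph α, H.IsPartialHypergraph G ∧ G.IsSubhypergraph K)

end FinsetHypergraph

/-- sum over an image is at most the sum over the original set (ℕ-valued). -/
lemma sum_image_le_nat {β α : Type*} [DecidableEq α] (s : Finset β) (f : β → α) (g : α → ℕ) :
    ∑ a ∈ s.image f, g a ≤ ∑ b ∈ s, g (f b) := by
  classical
  induction s using Finset.induction_on with
  | empty => simp
  | @insert a s' h ih =>
    rw [Finset.image_insert, Finset.sum_insert h]
    by_cases hfa : f a ∈ s'.image f
    · rw [Finset.insert_eq_self.mpr hfa]
      omega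
    · rw [Finset.sum_insert hfa]
      omega

namespace FinsetHypergraph

variable {α : Type*} [DecidableEq α] (H : FinsetHypergraph α)

lemma empty_matching : H.IsMatching ∅ := ⟨Finset.empty_subset _, by simp⟩

lemma nuE_set_nonempty :
    ((fun M : Finset (Finset α) => M.card) '' {M | H.IsMatching M}).Nonempty :=
  ⟨0, ∅, H.empty_matching, rfl⟩

lemma nuE_bddAbove :
    BddAbove ((fun M : Finset (Finset α) => M.card) '' {M | H.IsMatching M}) := by
  refine ⟨H.E.card, ?_⟩
  rintro n ⟨M, hM, rfl⟩
  exact Finset.card_le_card hM.1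

lemma card_le_nuE {M : Finset (Finset α)} (hM : H.IsMatching M) : M.card ≤ H.nuE :=
  le_csSup H.nuE_bddAbove ⟨M, hM, rfl⟩

lemma exists_max_matching : ∃ M, H.IsMaxEMatching M ∧ M.card = H.nuE := by
  obtain ⟨M, hM, hMc⟩ := Nat.sSup_mem H.nuE_set_nonempty H.nuE_bddAbove
  dsimp only at hMc
  exact ⟨M, ⟨hM, fun M' hM' => by rw [hMc]; exact H.card_le_nuE hM'⟩, hMc⟩

lemma maxEMatching_card {M : Finset (Finset α)} (hM : H.IsMaxEMatching M) :
    M.card = H.nuE := by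
  obtain ⟨M', hM', hc⟩ := H.exists_max_matching
  exact le_antisymm (H.card_le_nuE hM.1) (hc ▸ hM.2 M' hM'.1)

lemma one_cover : H.IsECover (fun _ => 1) := by
  intro e he
  simpa using (H.edge_nonempty e he).card_pos

lemma tauE_set_nonempty :
    ((fun x : α → ℕ => ∑ u ∈ H.V, x u) '' {x | H.IsCover (fun _ => 1) x}).Nonempty :=
  ⟨∑ u ∈ H.V, 1, (fun _ => 1), H.one_cover, rfl⟩

lemma tauE_le_cover {x : α → ℕ} (hx : H.IsECover x) : H.tauE ≤ ∑ u ∈ H.V, x u :=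
  Nat.sInf_le ⟨x, hx, rfl⟩

lemma exists_min_cover : ∃ x, H.IsMinECover x ∧ ∑ u ∈ H.V, x u = H.tauE := by
  obtain ⟨x, hx, hxc⟩ := Nat.sInf_mem H.tauE_set_nonempty
  dsimp only at hxc
  exact ⟨x, ⟨hx, fun y hy => by rw [hxc]; exact H.tauE_le_cover hy⟩, hxc⟩

lemma minECover_sum {x : α → ℕ} (hx : H.IsMinECover x) :
    ∑ u ∈ H.V, x u = H.tauE := by
  obtain ⟨y, hy, hyc⟩ := H.exists_min_cover
  exact le_antisymm (hyc ▸ hx.2 y hy.1) (H.tauE_le_cover hx.1)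

lemma matching_pairwiseDisjoint {M : Finset (Finset α)} (hM : H.IsMatching M) :
    (M : Set (Finset α)).PairwiseDisjoint id := fun e he f hf hef => hM.2 e he f hf hef

/-- Weak duality: the size of any matching is at most the total weight of any cover. -/
lemma matching_card_le_cover {M : Finset (Finset α)} {x : α → ℕ}
    (hM : H.IsMatching M) (hx : H.IsECover x) : M.card ≤ ∑ u ∈ H.V, x u := by
  have h1 : M.card = ∑ m ∈ M, 1 := by simp
  have h2 : ∑ m ∈ M, 1 ≤ ∑ m ∈ M, ∑ u ∈ m, x u :=
    Finset.sum_le_sum fun m hm => hx m (hM.1 hm)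
  have h3 : ∑ m ∈ M, ∑ u ∈ m, x u = ∑ u ∈ M.biUnion id, x u :=
    (Finset.sum_biUnion (H.matching_pairwiseDisjoint hM)).symm
  have h4 : ∑ u ∈ M.biUnion id, x u ≤ ∑ u ∈ H.V, x u := by
    refine Finset.sum_le_sum_of_subset ?_
    intro u hu
    obtain ⟨m, hm, hum⟩ := Finset.mem_biUnion.mp hu
    exact H.edge_subset m (hM.1 hm) hum
  omega

lemma nuE_le_tauE : H.nuE ≤ H.tauE := by
  obtain ⟨M, _, hMc⟩ := H.exists_max_matching
  obtain ⟨x, hx, hxc⟩ := H.exists_min_cover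
  rw [← hMc, ← hxc]
  exact H.matching_card_le_cover ‹H.IsMaxEMatching M›.1 hx.1

end FinsetHypergraph
namespace FinsetHypergraph

variable {α : Type*} [DecidableEq α] (H : FinsetHypergraph α)

/-- The partial hypergraph of all edges avoiding a vertex `t`. -/
def avoid (t : α) : FinsetHypergraph α where
  V := (H.E.filter fun e => t ∉ e).biUnion id
  E := H.E.filter fun e => t ∉ e
  edge_nonempty := fun e he => H.edge_nonempty e (Finset.mem_filter.mp he).1
  edge_subset := fun e he u hu => Finset.mem_biUnion.mpr ⟨e, he, hu⟩
  vertex_mem := fun v hv => by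
    obtain ⟨e, he, hv⟩ := Finset.mem_biUnion.mp hv
    exact ⟨e, he, hv⟩

lemma avoid_E_subset (t : α) : (H.avoid t).E ⊆ H.E := Finset.filter_subset _ _

lemma avoid_not_mem {t : α} {e : Finset α} (he : e ∈ (H.avoid t).E) : t ∉ e :=
  (Finset.mem_filter.mp he).2

/-- Balancedness is inherited by partial hypergraphs. -/
lemma Balanced.partial {H K : FinsetHypergraph α} (hH : H.Balanced) (hKE : K.E ⊆ H.E) :
    K.Balanced := by
  rintro ⟨l, v, e, ⟨⟨hl, hmem, hdist, hclose⟩, hstrong⟩, hodd⟩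
  exact hH ⟨l, v, e, ⟨⟨hl, fun i h1 h2 => ⟨hKE (hmem i h1 h2).1, (hmem i h1 h2).2⟩,
    hdist, hclose⟩, hstrong⟩, hodd⟩

lemma mem_delV_E {t : α} {f : Finset α} :
    f ∈ (H.delV t).E ↔ f.Nonempty ∧ ∃ e ∈ H.E, e.erase t = f := by
  constructor
  · intro hf
    obtain ⟨hf1, hf2⟩ := Finset.mem_filter.mp hf
    obtain ⟨e, he, rfl⟩ := Finset.mem_image.mp hf1
    exact ⟨hf2, e, he, rfl⟩
  · rintro ⟨hne, e, he, rfl⟩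
    exact Finset.mem_filter.mpr ⟨Finset.mem_image_of_mem _ he, hne⟩

/-- Balancedness is inherited by vertex deletion. -/
lemma Balanced.delV {H : FinsetHypergraph α} (hH : H.Balanced) (t : α) :
    (H.delV t).Balanced := by
  rintro ⟨l, v, e, ⟨⟨hl, hmem, hdist, hclose⟩, hstrong⟩, hodd⟩
  -- lift each edge of the cycle to an edge of `H`
  have hlift : ∀ i, 1 ≤ i → i ≤ l → ∃ g ∈ H.E, g.erase t = e i := by
    intro i h1 h2
    obtain ⟨hne, g, hg, hge⟩ := (H.mem_delV_E).mp (hmem i h1 h2).1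
    exact ⟨g, hg, hge⟩
  classical
  set ee : ℕ → Finset α := fun i =>
    if h : 1 ≤ i ∧ i ≤ l then Classical.choose (hlift i h.1 h.2) else ∅ with hee
  have hee_spec : ∀ i (h1 : 1 ≤ i) (h2 : i ≤ l),
      ee i ∈ H.E ∧ (ee i).erase t = e i := by
    intro i h1 h2
    have := Classical.choose_spec (hlift i h1 h2)
    simp only [hee, dif_pos (And.intro h1 h2)]
    exact this
  -- the vertices of the cycle avoid `t`
  have hvt : ∀ j, j < l → v j ≠ t := by
    intro j hj
    have hjV : v j ∈ (H.delV t).V := by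
      rcases Nat.eq_zero_or_pos j with rfl | hj0
      · have := (hmem l (by omega) le_rfl).2.2
        rw [hclose] at this
        exact (H.delV t).edge_subset _ (hmem l (by omega) le_rfl).1 this
      · exact (H.delV t).edge_subset _ (hmem j hj0 (le_of_lt hj)).1 (hmem j hj0 (le_of_lt hj)).2.2
    exact Finset.ne_of_mem_erase hjV
  have himg : ∀ i (h1 : 1 ≤ i) (h2 : i ≤ l),
      ee i ∩ (Finset.range l).image v = e i ∩ (Finset.range l).image v := by
    intro i h1 h2
    ext u
    simp only [Finset.mem_inter]
    constructor
    · rintro ⟨hu1, hu2⟩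
      obtain ⟨j, hj, rfl⟩ := Finset.mem_image.mp hu2
      have : v j ≠ t := hvt j (Finset.mem_range.mp hj)
      refine ⟨?_, hu2⟩
      rw [← (hee_spec i h1 h2).2]
      exact Finset.mem_erase.mpr ⟨this, hu1⟩
    · rintro ⟨hu1, hu2⟩
      refine ⟨?_, hu2⟩
      rw [← (hee_spec i h1 h2).2] at hu1
      exact Finset.mem_of_mem_erase hu1
  refine hH ⟨l, v, ee, ⟨⟨hl, ?_, hdist, hclose⟩, ?_⟩, hodd⟩
  · intro i h1 h2
    refine ⟨(hee_spec i h1 h2).1, ?_, ?_⟩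
    · have := (hmem i h1 h2).2.1
      rw [← (hee_spec i h1 h2).2] at this
      exact Finset.mem_of_mem_erase this
    · have := (hmem i h1 h2).2.2
      rw [← (hee_spec i h1 h2).2] at this
      exact Finset.mem_of_mem_erase this
  · intro i h1 h2
    rw [himg i h1 h2]
    exact hstrong i h1 h2

end FinsetHypergraph
namespace FinsetHypergraph

variable {α : Type*} [DecidableEq α]

/-- Auxiliary adjacency between edges: distinct edges in `(M \ S) ∪ (S \ M)`
sharing a vertex different from `v`. -/
def sadj (M S : Finset (Finset α)) (v : α) (e f : Finset α) : Prop :=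
  e ≠ f ∧ e ∈ (M \ S) ∪ (S \ M) ∧ f ∈ (M \ S) ∪ (S \ M) ∧ ∃ u, u ∈ e ∧ u ∈ f ∧ u ≠ v

lemma sadj_symm {M S : Finset (Finset α)} {v : α} : Symmetric (sadj M S v) := by
  rintro e f ⟨h1, h2, h3, u, hu1, hu2, hu3⟩
  exact ⟨h1.symm, h3, h2, u, hu2, hu1, hu3⟩

/-- Reachability gives an indexed path. -/
lemma sadj_path {M S : Finset (Finset α)} {v : α} {p q : Finset α}
    (h : Relation.ReflTransGen (sadj M S v) p q) :
    ∃ n : ℕ, ∃ w : ℕ → Finset α, w 0 = p ∧ w n = q ∧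
      ∀ i < n, sadj M S v (w i) (w (i + 1)) := by
  induction h with
  | refl => exact ⟨0, fun _ => p, rfl, rfl, by omega⟩
  | @tail b c hpb hbc ih =>
    obtain ⟨n, w, hw0, hwn, hstep⟩ := ih
    refine ⟨n + 1, fun i => if i ≤ n then w i else c, by simpa using hw0, by simp, ?_⟩
    intro i hi
    rcases Nat.lt_or_ge i n with hin | hin
    · simpa [Nat.le_of_lt hin, Nat.succ_le_of_lt hin] using hstep i hin
    · have hieq : i = n := by omega
      subst hieq
      simpa [hwn] using hbc

end FinsetHypergraph
namespace FinsetHypergraph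

variable {α : Type*} [DecidableEq α]

/-- Core lemma: in a balanced hypergraph, two distinct "petals" (edges of `S` containing `v`)
cannot be connected by a `sadj`-path, where `M` is a matching missing `v` and the edges of `S`
pairwise intersect in at most `{v}`. -/
lemma no_two_petals (H : FinsetHypergraph α) (hH : H.Balanced) {M S : Finset (Finset α)} {v : α}
    (hM : H.IsMatching M) (hvM : ∀ m ∈ M, v ∉ m) (hSE : S ⊆ H.E)
    (hSp : ∀ f ∈ S, ∀ g ∈ S, f ≠ g → f ∩ g ⊆ {v})
    {p₁ q₁ : Finset α} (hp₁ : p₁ ∈ S \ M) (hq₁ : q₁ ∈ S \ M)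
    (hvp₁ : v ∈ p₁) (hvq₁ : v ∈ q₁) (hpq₁ : p₁ ≠ q₁)
    (hreach : Relation.ReflTransGen (sadj M S v) p₁ q₁) : False := by
  classical
  obtain ⟨n₁, w₁, hw₁0, hw₁n, hstep₁⟩ := sadj_path hreach
  have hQex : ∃ n : ℕ, ∃ p : Finset α, ∃ q : Finset α, ∃ w : ℕ → Finset α,
      p ∈ S \ M ∧ q ∈ S \ M ∧ v ∈ p ∧ v ∈ q ∧ p ≠ q ∧ w 0 = p ∧ w n = q ∧
      ∀ i < n, sadj M S v (w i) (w (i + 1)) :=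
    ⟨n₁, p₁, q₁, w₁, hp₁, hq₁, hvp₁, hvq₁, hpq₁, hw₁0, hw₁n, hstep₁⟩
  obtain ⟨p, q, w, hp, hq, hvp, hvq, hpq, hw0, hwn, hstep⟩ := Nat.find_spec hQex
  set n := Nat.find hQex with hn
  have hmin : ∀ m, m < n → ¬ (∃ p : Finset α, ∃ q : Finset α, ∃ w : ℕ → Finset α,
      p ∈ S \ M ∧ q ∈ S \ M ∧ v ∈ p ∧ v ∈ q ∧ p ≠ q ∧ w 0 = p ∧ w m = q ∧
      ∀ i < m, sadj M S v (w i) (w (i + 1))) := fun m hm => Nat.find_min hQex hm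
  have hn0 : n ≠ 0 := by
    intro h
    rw [h] at hwn
    rw [hw0] at hwn
    exact hpq hwn
  have hU : ∀ i ≤ n, w i ∈ (M \ S) ∪ (S \ M) := by
    intro i hi
    rcases Nat.lt_or_ge i n with h | h
    · exact (hstep i h).2.1
    · have hi' : i = n := by omega
      have h2 := hstep (n - 1) (by omega)
      rw [Nat.sub_add_cancel (by omega)] at h2
      rw [hi']
      exact h2.2.2.1
  -- no chords
  have hchord : ∀ i j, i + 1 < j → j ≤ n → ¬ sadj M S v (w i) (w j) := by
    intro i j hij hjn hadj
    refine hmin (n - (j - i - 1)) (by omega)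
      ⟨p, q, fun k => if k ≤ i then w k else w (k + (j - i - 1)), hp, hq, hvp, hvq, hpq, ?_, ?_, ?_⟩
    · simp [hw0]
    · have h1 : ¬ (n - (j - i - 1) ≤ i) := by omega
      have h2 : n - (j - i - 1) + (j - i - 1) = n := by omega
      beta_reduce
      rw [if_neg h1, h2, hwn]
    · intro k hk
      beta_reduce
      by_cases hk1 : k + 1 ≤ i
      · rw [if_pos (by omega : k ≤ i), if_pos hk1]
        exact hstep k (by omega)
      · by_cases hk2 : k ≤ i
        · have hki : k = i := by omega
          subst hki
          rw [if_pos hk2, if_neg hk1, (by omega : k + 1 + (j - k - 1) = j)]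
          exact hadj
        · rw [if_neg hk2, if_neg hk1, (by omega : k + 1 + (j - i - 1) = (k + (j - i - 1)) + 1)]
          exact hstep _ (by omega)
  -- vertices of the path are pairwise distinct
  have hinj : ∀ i j, i < j → j ≤ n → w i ≠ w j := by
    intro i j hij hjn heq
    refine hmin (n - (j - i)) (by omega)
      ⟨p, q, fun k => if k ≤ i then w k else w (k + (j - i)), hp, hq, hvp, hvq, hpq, ?_, ?_, ?_⟩
    · simp [hw0]
    · beta_reduce
      by_cases h1 : n - (j - i) ≤ i
      · rw [if_pos h1, (by omega : n - (j - i) = i), heq, (by omega : j = n), hwn]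
      · rw [if_neg h1, (by omega : n - (j - i) + (j - i) = n), hwn]
    · intro k hk
      beta_reduce
      by_cases hk1 : k + 1 ≤ i
      · rw [if_pos (by omega : k ≤ i), if_pos hk1]
        exact hstep k (by omega)
      · by_cases hk2 : k ≤ i
        · have hki : k = i := by omega
          subst hki
          rw [if_pos hk2, if_neg hk1, heq, (by omega : k + 1 + (j - k) = j + 1)]
          exact hstep j (by omega)
        · rw [if_neg hk2, if_neg hk1, (by omega : k + 1 + (j - i) = (k + (j - i)) + 1)]
          exact hstep _ (by omega)
  -- the path alternates between `S \ M` and `M \ S`; parity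
  have hpar : ∀ i ≤ n, (Even i → w i ∈ S \ M) ∧ (¬ Even i → w i ∈ M \ S) := by
    intro i
    induction i with
    | zero =>
      intro _
      constructor
      · intro _; rw [hw0]; exact hp
      · intro h; exact absurd Even.zero h
    | succ k ih =>
      intro hkn
      have ihk := ih (by omega)
      obtain ⟨hne, hU1, hU2, u, hu1, hu2, huv⟩ := hstep k (by omega)
      have hopp1 : ¬ (w k ∈ S \ M ∧ w (k + 1) ∈ S \ M) := by
        rintro ⟨h1, h2⟩
        have := hSp _ (Finset.mem_sdiff.mp h1).1 _ (Finset.mem_sdiff.mp h2).1 hne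
          (Finset.mem_inter.mpr ⟨hu1, hu2⟩)
        rw [Finset.mem_singleton] at this
        exact huv this
      have hopp2 : ¬ (w k ∈ M \ S ∧ w (k + 1) ∈ M \ S) := by
        rintro ⟨h1, h2⟩
        have := hM.2 _ (Finset.mem_sdiff.mp h1).1 _ (Finset.mem_sdiff.mp h2).1 hne
        exact absurd hu2 (Finset.disjoint_left.mp this hu1)
      constructor
      · intro hev
        have hko : ¬ Even k := by
          rw [Nat.even_add_one] at hev
          exact hev
        have hwk : w k ∈ M \ S := ihk.2 hko
        rcases Finset.mem_union.mp hU2 with h | h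
        · exact absurd ⟨hwk, h⟩ hopp2
        · exact h
      · intro hodd
        have hke : Even k := by
          by_contra hko
          exact hodd ((Nat.even_add_one).mpr hko)
        have hwk : w k ∈ S \ M := ihk.1 hke
        rcases Finset.mem_union.mp hU2 with h | h
        · exact h
        · exact absurd ⟨hwk, h⟩ hopp1
  have hneven : Even n := by
    by_contra hodd
    have := (hpar n le_rfl).2 hodd
    rw [hwn] at this
    have h1 := (Finset.mem_sdiff.mp this).2
    exact h1 (Finset.mem_sdiff.mp hq).1
  have hn2 : 2 ≤ n := by
    rcases hneven with ⟨m, hm⟩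
    omega
  -- interior path edges do not contain `v`
  have hint : ∀ i, 0 < i → i < n → v ∉ w i := by
    intro i h0 hin hvw
    rcases Finset.mem_union.mp (hU i (le_of_lt hin)) with hMS | hSM
    · exact hvM _ (Finset.mem_sdiff.mp hMS).1 hvw
    · refine hmin i hin ⟨p, w i, fun k => w k, hp, hSM, hvp, hvw, ?_, hw0, rfl,
        fun k hk => hstep k (by omega)⟩
      rw [← hw0]
      exact hinj 0 i h0 (le_of_lt hin)
  -- choose connecting vertices
  have hex : ∀ i, i < n → ∃ u, u ∈ w i ∧ u ∈ w (i + 1) ∧ u ≠ v :=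
    fun i hi => (hstep i hi).2.2.2
  set uu : ℕ → α := fun i => if h : i < n then (hex i h).choose else v with huudef
  have huu : ∀ i (h : i < n), uu i ∈ w i ∧ uu i ∈ w (i + 1) ∧ uu i ≠ v := by
    intro i h
    simp only [huudef, dif_pos h]
    exact (hex i h).choose_spec
  set vv : ℕ → α := fun i => if i = 0 ∨ i = n + 1 then v else uu (i - 1) with hvvdef
  set ee : ℕ → Finset α := fun i => w (i - 1) with heedef
  have hvv0 : vv 0 = v := by simp [hvvdef]
  have hvvl : vv (n + 1) = v := by simp [hvvdef]
  have hvvmid : ∀ i, 1 ≤ i → i ≤ n → vv i = uu (i - 1) := by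
    intro i h1 h2
    have : ¬ (i = 0 ∨ i = n + 1) := by omega
    simp [hvvdef, this]
  have hUE : ∀ e, e ∈ (M \ S) ∪ (S \ M) → e ∈ H.E := by
    intro e he
    rcases Finset.mem_union.mp he with h | h
    · exact hM.1 (Finset.mem_sdiff.mp h).1
    · exact hSE (Finset.mem_sdiff.mp h).1
  -- build the strong odd cycle
  refine hH ⟨n + 1, vv, ee, ⟨⟨by omega, ?_, ?_, ?_⟩, ?_⟩, Even.add_one hneven⟩
  · -- edge/vertex membership conditions
    intro i h1 h2
    refine ⟨hUE _ (hU (i - 1) (by omega)), ?_, ?_⟩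
    · -- vv (i-1) ∈ ee i
      rcases Nat.lt_or_ge i 2 with hi2 | hi2
      · have hi1 : i = 1 := by omega
        subst hi1
        show vv 0 ∈ w 0
        rw [hvv0, hw0]
        exact hvp
      · show vv (i - 1) ∈ w (i - 1)
        rw [hvvmid (i - 1) (by omega) (by omega)]
        have := (huu (i - 1 - 1) (by omega)).2.1
        rw [(by omega : i - 1 - 1 + 1 = i - 1)] at this
        exact this
    · -- vv i ∈ ee i
      rcases Nat.lt_or_ge i (n + 1) with hi | hi
      · show vv i ∈ w (i - 1)
        rw [hvvmid i h1 (by omega)]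
        exact (huu (i - 1) (by omega)).1
      · have hieq : i = n + 1 := by omega
        subst hieq
        show vv (n + 1) ∈ w (n + 1 - 1)
        rw [hvvl, (by omega : n + 1 - 1 = n), hwn]
        exact hvq
  · -- distinctness
    have key : ∀ i j, i < j → j < n + 1 → vv i = vv j → False := by
      intro i j hij hj heq
      rcases Nat.eq_zero_or_pos i with rfl | hi0
      · rw [hvv0, hvvmid j (by omega) (by omega)] at heq
        exact (huu (j - 1) (by omega)).2.2 heq.symm
      · rw [hvvmid i (by omega) (by omega), hvvmid j (by omega) (by omega)] at heq
        have hx1 : uu (i - 1) ∈ w (i - 1) := (huu (i - 1) (by omega)).1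
        have hx2 : uu (i - 1) ∈ w j := by
          rw [heq]
          have := (huu (j - 1) (by omega)).2.1
          rwa [(by omega : j - 1 + 1 = j)] at this
        have hxv : uu (i - 1) ≠ v := (huu (i - 1) (by omega)).2.2
        exact hchord (i - 1) j (by omega) (by omega)
          ⟨hinj (i - 1) j (by omega) (by omega), hU (i - 1) (by omega), hU j (by omega),
            uu (i - 1), hx1, hx2, hxv⟩
    intro i j hi hj heq
    rcases lt_trichotomy i j with h | h | h
    · exact absurd heq (fun hh => key i j h hj hh)
    · exact h
    · exact absurd heq (fun hh => key j i h hi hh.symm)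
  · rw [hvvl, hvv0]
  · -- strongness
    intro i h1 h2
    have hsub : ee i ∩ (Finset.range (n + 1)).image vv ⊆ {vv (i - 1), vv i} := by
      intro y hy
      obtain ⟨hy1, hy2⟩ := Finset.mem_inter.mp hy
      obtain ⟨j, hjr, rfl⟩ := Finset.mem_image.mp hy2
      have hj : j < n + 1 := Finset.mem_range.mp hjr
      have hy1' : vv j ∈ w (i - 1) := hy1
      rcases Nat.eq_zero_or_pos j with rfl | hj1
      · -- vv 0 = v
        rw [hvv0] at hy1' ⊢
        have hi1 : i - 1 = 0 ∨ i - 1 = n ∨ (0 < i - 1 ∧ i - 1 < n) := by omega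
        rcases hi1 with h | h | h
        · rw [(by omega : i - 1 = 0) , hvv0]
          exact Finset.mem_insert_self _ _
        · have : i = n + 1 := by omega
          rw [this, hvvl]
          exact Finset.mem_insert_of_mem (Finset.mem_singleton_self _)
        · exact absurd hy1' (hint (i - 1) h.1 h.2)
      · have hjn : j ≤ n := by omega
        have hvvj : vv j = uu (j - 1) := hvvmid j hj1 hjn
        have hx1 : uu (j - 1) ∈ w (j - 1) := (huu (j - 1) (by omega)).1
        have hx2 : uu (j - 1) ∈ w j := by
          have := (huu (j - 1) (by omega)).2.1
          rwa [(by omega : j - 1 + 1 = j)] at this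
        have hxv : uu (j - 1) ≠ v := (huu (j - 1) (by omega)).2.2
        rcases eq_or_ne j i with rfl | hji
        · exact Finset.mem_insert_of_mem (Finset.mem_singleton_self _)
        · rcases eq_or_ne j (i - 1) with rfl | hji1
          · exact Finset.mem_insert_self _ _
          · exfalso
            rw [hvvj] at hy1'
            -- uu (j-1) lies in w (i-1), w (j-1), w j with i-1 ∉ {j-1, j}
            have ha1 : i - 1 ≠ j := fun hh => hji (by omega)
            have ha2 : i - 1 ≠ j - 1 := by
              intro hh
              have : i = j := by omega
              exact hji (by omega)
            rcases Nat.lt_or_ge (i - 1) (j - 1) with hc | hc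
            · exact hchord (i - 1) j (by omega) (by omega)
                ⟨hinj (i - 1) j (by omega) (by omega), hU (i - 1) (by omega), hU j (by omega),
                  uu (j - 1), hy1', hx2, hxv⟩
            · have hc2 : j < i - 1 := by omega
              exact hchord (j - 1) (i - 1) (by omega) (by omega)
                ⟨hinj (j - 1) (i - 1) (by omega) (by omega), hU (j - 1) (by omega),
                  hU (i - 1) (by omega), uu (j - 1), hx1, hy1', hxv⟩
    calc (ee i ∩ (Finset.range (n + 1)).image vv).card
        ≤ ({vv (i - 1), vv i} : Finset α).card := Finset.card_le_card hsub
      _ ≤ 2 := (Finset.card_insert_le _ _).trans (by simp)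

end FinsetHypergraph
namespace FinsetHypergraph

variable {α : Type*} [DecidableEq α]

/-- The key augmentation lemma: if `M` is a matching missing `v` and `S` is a larger family of
edges pairwise intersecting in at most `{v}`, then there is a larger matching. -/
lemma star_lemma (H : FinsetHypergraph α) (hH : H.Balanced) {M S : Finset (Finset α)} {v : α}
    (hM : H.IsMatching M) (hvM : ∀ m ∈ M, v ∉ m)
    (hSE : S ⊆ H.E) (hSp : ∀ f ∈ S, ∀ g ∈ S, f ≠ g → f ∩ g ⊆ {v})
    (hcard : M.card < S.card) :
    ∃ N, H.IsMatching N ∧ M.card < N.card := by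
  classical
  set M₀ := M \ S with hM₀def
  set S₀ := S \ M with hS₀def
  set U := M₀ ∪ S₀ with hUdef
  have hsymm : Symmetric (Relation.ReflTransGen (sadj M S v)) :=
    by haveI : Std.Symm (sadj M S v) := ⟨fun a b h => sadj_symm h⟩
       exact fun a b h => Std.Symm.symm a b h
  set cmp : Finset α → Finset (Finset α) :=
    fun x => U.filter (fun y => Relation.ReflTransGen (sadj M S v) x y) with hcmpdef
  have hcmp_sub : ∀ x, cmp x ⊆ U := fun x => Finset.filter_subset _ _
  have hmem_cmp : ∀ x ∈ U, x ∈ cmp x := fun x hx =>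
    Finset.mem_filter.mpr ⟨hx, Relation.ReflTransGen.refl⟩
  have hcmp_eq : ∀ x y, Relation.ReflTransGen (sadj M S v) x y → cmp x = cmp y := by
    intro x y hxy
    ext z
    simp only [hcmpdef, Finset.mem_filter, and_congr_right_iff]
    intro _
    exact ⟨fun h => (hsymm hxy).trans h, fun h => hxy.trans h⟩
  set CC := U.image cmp with hCCdef
  have hUbi : U = CC.biUnion id := by
    ext z
    simp only [Finset.mem_biUnion, id, hCCdef, Finset.mem_image]
    constructor
    · intro hz
      exact ⟨cmp z, ⟨z, hz, rfl⟩, hmem_cmp z hz⟩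
    · rintro ⟨D, ⟨x, _, rfl⟩, hzD⟩
      exact hcmp_sub x hzD
  have hdisjCC : (CC : Set (Finset (Finset α))).PairwiseDisjoint id := by
    rintro D1 hD1 D2 hD2 hne
    obtain ⟨x, _, rfl⟩ := Finset.mem_image.mp hD1
    obtain ⟨y, _, rfl⟩ := Finset.mem_image.mp hD2
    refine Finset.disjoint_left.mpr ?_
    intro z hz1 hz2
    have h1 := (Finset.mem_filter.mp hz1).2
    have h2 := (Finset.mem_filter.mp hz2).2
    exact hne ((hcmp_eq x z h1).trans (hcmp_eq y z h2).symm)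
  have hMSdisj : Disjoint M₀ S₀ := by
    refine Finset.disjoint_left.mpr ?_
    intro e he1 he2
    exact (Finset.mem_sdiff.mp he2).2 (Finset.mem_sdiff.mp he1).1
  set g : Finset α → ℤ := fun e => if e ∈ S₀ then 1 else -1 with hgdef
  have hsum_split : ∀ D : Finset (Finset α), D ⊆ U →
      ∑ e ∈ D, g e = ((D ∩ S₀).card : ℤ) - ((D ∩ M₀).card : ℤ) := by
    intro D hD
    have hDeq : D = (D ∩ S₀) ∪ (D ∩ M₀) := by
      ext e
      simp only [Finset.mem_union, Finset.mem_inter]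
      constructor
      · intro he
        rcases Finset.mem_union.mp (hD he) with h | h
        · exact Or.inr ⟨he, h⟩
        · exact Or.inl ⟨he, h⟩
      · rintro (⟨h, _⟩ | ⟨h, _⟩) <;> exact h
    have hdisj2 : Disjoint (D ∩ S₀) (D ∩ M₀) := by
      refine Finset.disjoint_left.mpr ?_
      intro e he1 he2
      exact Finset.disjoint_left.mp hMSdisj (Finset.mem_inter.mp he2).2
        (Finset.mem_inter.mp he1).2
    have h1 : ∑ e ∈ D ∩ S₀, g e = ((D ∩ S₀).card : ℤ) := by
      rw [Finset.sum_congr rfl (fun e he => if_pos (Finset.mem_inter.mp he).2)]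
      simp
    have h2 : ∑ e ∈ D ∩ M₀, g e = -((D ∩ M₀).card : ℤ) := by
      rw [Finset.sum_congr rfl (fun e he => if_neg (Finset.disjoint_left.mp hMSdisj
        (Finset.mem_inter.mp he).2))]
      simp
    calc ∑ e ∈ D, g e = ∑ e ∈ (D ∩ S₀) ∪ (D ∩ M₀), g e := by rw [← hDeq]
      _ = ∑ e ∈ D ∩ S₀, g e + ∑ e ∈ D ∩ M₀, g e := Finset.sum_union hdisj2
      _ = ((D ∩ S₀).card : ℤ) - ((D ∩ M₀).card : ℤ) := by rw [h1, h2]; ring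
  have hUS : U ∩ S₀ = S₀ := by
    rw [Finset.inter_eq_right]
    exact Finset.subset_union_right
  have hUM : U ∩ M₀ = M₀ := by
    rw [Finset.inter_eq_right]
    exact Finset.subset_union_left
  have hS₀card : S₀.card + (S ∩ M).card = S.card := Finset.card_sdiff_add_card_inter S M
  have hM₀card : M₀.card + (M ∩ S).card = M.card := Finset.card_sdiff_add_card_inter M S
  have hinterMS : (S ∩ M).card = (M ∩ S).card := by rw [Finset.inter_comm]
  have htot : 0 < ∑ e ∈ U, g e := by
    rw [hsum_split U (le_refl _), hUS, hUM]
    have : M₀.card < S₀.card := by omega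
    push_cast
    omega
  have hexD : ∃ x ∈ U, 0 < ∑ e ∈ cmp x, g e := by
    by_contra hno
    push_neg at hno
    have hle : ∑ e ∈ U, g e ≤ 0 := by
      rw [hUbi, Finset.sum_biUnion hdisjCC]
      refine Finset.sum_nonpos ?_
      intro D hD
      obtain ⟨x, hx, rfl⟩ := Finset.mem_image.mp hD
      exact hno x hx
    omega
  obtain ⟨x₀, hx₀U, hx₀pos⟩ := hexD
  set D := cmp x₀ with hDdef
  have hDU : D ⊆ U := hcmp_sub x₀
  have hClosed : ∀ y ∈ D, ∀ z, sadj M S v y z → z ∈ D := by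
    intro y hy z hyz
    refine Finset.mem_filter.mpr ⟨hyz.2.2.1, ?_⟩
    exact ((Finset.mem_filter.mp hy).2).trans (Relation.ReflTransGen.single hyz)
  have hsur : (D ∩ M₀).card < (D ∩ S₀).card := by
    have := hsum_split D hDU
    rw [this] at hx₀pos
    omega
  -- at most one petal in the component, otherwise we find an odd strong cycle
  have hpet : ∀ f ∈ D, ∀ f' ∈ D, v ∈ f → v ∈ f' → f = f' := by
    intro f hf f' hf' hvf hvf'
    by_contra hne
    have hfS : ∀ e ∈ D, v ∈ e → e ∈ S₀ := by
      intro e he hve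
      rcases Finset.mem_union.mp (hDU he) with h | h
      · exact absurd hve (hvM e (Finset.mem_sdiff.mp h).1)
      · exact h
    have hreach : Relation.ReflTransGen (sadj M S v) f f' :=
      (hsymm (Finset.mem_filter.mp hf).2).trans (Finset.mem_filter.mp hf').2
    exact no_two_petals H hH hM hvM hSE hSp (hfS f hf hvf) (hfS f' hf' hvf') hvf hvf' hne hreach
  -- the swap
  refine ⟨(M \ D) ∪ (D ∩ S₀), ⟨?_, ?_⟩, ?_⟩
  · intro e he
    rcases Finset.mem_union.mp he with h | h
    · exact hM.1 (Finset.mem_sdiff.mp h).1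
    · exact hSE (Finset.mem_sdiff.mp (Finset.mem_inter.mp h).2).1
  · have hcross : ∀ e ∈ M \ D, ∀ f ∈ D ∩ S₀, Disjoint e f := by
      intro e he f hf
      obtain ⟨heM, heD⟩ := Finset.mem_sdiff.mp he
      obtain ⟨hfD, hfS₀⟩ := Finset.mem_inter.mp hf
      refine Finset.disjoint_left.mpr ?_
      intro a hae haf
      have hav : a ≠ v := fun h => hvM e heM (h ▸ hae)
      have hef : e ≠ f := fun h => (Finset.mem_sdiff.mp hfS₀).2 (h ▸ heM)
      by_cases heS : e ∈ S
      · have := hSp e heS f (Finset.mem_sdiff.mp hfS₀).1 hef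
          (Finset.mem_inter.mpr ⟨hae, haf⟩)
        exact hav (Finset.mem_singleton.mp this)
      · have heU : e ∈ U := Finset.mem_union_left _ (Finset.mem_sdiff.mpr ⟨heM, heS⟩)
        have : sadj M S v f e := ⟨hef.symm, hDU hfD, heU, a, haf, hae, hav⟩
        exact heD (hClosed f hfD e this)
    intro e he f hf hef
    rcases Finset.mem_union.mp he with he1 | he1 <;> rcases Finset.mem_union.mp hf with hf1 | hf1
    · exact hM.2 e (Finset.mem_sdiff.mp he1).1 f (Finset.mem_sdiff.mp hf1).1 hef
    · exact hcross e he1 f hf1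
    · exact (hcross f hf1 e he1).symm
    · -- both in D ∩ S₀
      refine Finset.disjoint_left.mpr ?_
      intro a hae haf
      have h1 := hSp e (Finset.mem_sdiff.mp (Finset.mem_inter.mp he1).2).1
        f (Finset.mem_sdiff.mp (Finset.mem_inter.mp hf1).2).1 hef
        (Finset.mem_inter.mpr ⟨hae, haf⟩)
      have hav := Finset.mem_singleton.mp h1
      subst hav
      exact hef (hpet e (Finset.mem_inter.mp he1).1 f (Finset.mem_inter.mp hf1).1 hae haf)
  · -- cardinality increases
    have hdisjN : Disjoint (M \ D) (D ∩ S₀) := by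
      refine Finset.disjoint_left.mpr ?_
      intro e he1 he2
      exact (Finset.mem_sdiff.mp (Finset.mem_inter.mp he2).2).2 (Finset.mem_sdiff.mp he1).1
    rw [Finset.card_union_of_disjoint hdisjN]
    have hMD : M ∩ D = D ∩ M₀ := by
      ext e
      simp only [Finset.mem_inter]
      constructor
      · rintro ⟨heM, heD⟩
        rcases Finset.mem_union.mp (hDU heD) with h | h
        · exact ⟨heD, h⟩
        · exact absurd heM (Finset.mem_sdiff.mp h).2
      · rintro ⟨heD, heM₀⟩
        exact ⟨(Finset.mem_sdiff.mp heM₀).1, heD⟩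
    have hMsplit : (M \ D).card + (M ∩ D).card = M.card := Finset.card_sdiff_add_card_inter M D
    rw [hMD] at hMsplit
    omega

end FinsetHypergraph
namespace FinsetHypergraph

variable {α : Type*} [DecidableEq α]

lemma matching_subset {H : FinsetHypergraph α} {M N : Finset (Finset α)}
    (hM : H.IsMatching M) (hNM : N ⊆ M) : H.IsMatching N :=
  ⟨hNM.trans hM.1, fun e he f hf hef => hM.2 e (hNM he) f (hNM hf) hef⟩

lemma avoid_matching {H : FinsetHypergraph α} {t : α} {N : Finset (Finset α)}
    (hN : (H.avoid t).IsMatching N) : H.IsMatching N :=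
  ⟨hN.1.trans (H.avoid_E_subset t), hN.2⟩

lemma avoid_V_subset (H : FinsetHypergraph α) (t : α) : (H.avoid t).V ⊆ H.V := by
  intro u hu
  obtain ⟨e, he, hue⟩ := Finset.mem_biUnion.mp hu
  exact H.edge_subset e (Finset.mem_filter.mp he).1 hue

lemma tauE_le_avoid_succ (H : FinsetHypergraph α) {t : α} (ht : t ∈ H.V) :
    H.tauE ≤ (H.avoid t).tauE + 1 := by
  classical
  obtain ⟨y, hy, hyc⟩ := (H.avoid t).exists_min_cover
  set y' : α → ℕ := fun u => if u ∈ (H.avoid t).V then y u else 0 with hy'def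
  have hy'cov : ∀ e ∈ (H.avoid t).E, 1 ≤ ∑ u ∈ e, y' u := by
    intro e he
    have : ∑ u ∈ e, y' u = ∑ u ∈ e, y u := by
      refine Finset.sum_congr rfl ?_
      intro u hu
      rw [hy'def]
      exact if_pos ((H.avoid t).edge_subset e he hu)
    rw [this]
    exact hy.1 e he
  set x : α → ℕ := fun u => if u = t then y' u + 1 else y' u with hxdef
  have hxcov : H.IsECover x := by
    intro e he
    by_cases hte : t ∈ e
    · have h1 : 1 ≤ x t := by simp [hxdef]
      calc (1 : ℕ) ≤ x t := h1
        _ ≤ ∑ u ∈ e, x u := Finset.single_le_sum (fun u _ => Nat.zero_le _) hte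
    · have he' : e ∈ (H.avoid t).E := Finset.mem_filter.mpr ⟨he, hte⟩
      have : ∑ u ∈ e, x u = ∑ u ∈ e, y' u := by
        refine Finset.sum_congr rfl ?_
        intro u hu
        rw [hxdef]
        exact if_neg (fun h => hte (by rw [← h]; exact hu))
      rw [this]
      exact hy'cov e he'
  have hsum1 : ∑ u ∈ H.V, x u = ∑ u ∈ H.V, y' u + 1 := by
    rw [← Finset.add_sum_erase _ x ht, ← Finset.add_sum_erase _ y' ht]
    have h1 : x t = y' t + 1 := by simp [hxdef]
    have h2 : ∑ u ∈ H.V.erase t, x u = ∑ u ∈ H.V.erase t, y' u := by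
      refine Finset.sum_congr rfl ?_
      intro u hu
      rw [hxdef]
      exact if_neg (Finset.ne_of_mem_erase hu)
    omega
  have hsum2 : ∑ u ∈ H.V, y' u = ∑ u ∈ (H.avoid t).V, y u := by
    rw [← Finset.sum_subset (H.avoid_V_subset t) (fun u _ hu => by rw [hy'def]; exact if_neg hu)]
    refine Finset.sum_congr rfl ?_
    intro u hu
    rw [hy'def]
    exact if_pos hu
  have := H.tauE_le_cover hxcov
  omega

lemma delV_V (H : FinsetHypergraph α) (t : α) : (H.delV t).V = H.V.erase t := rfl

lemma tauE_le_delV (H : FinsetHypergraph α) {t : α} (hs : ({t} : Finset α) ∉ H.E) :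
    H.tauE ≤ (H.delV t).tauE := by
  classical
  obtain ⟨y, hy, hyc⟩ := (H.delV t).exists_min_cover
  set y' : α → ℕ := fun u => if u ∈ (H.delV t).V then y u else 0 with hy'def
  have hy'cov : ∀ e ∈ (H.delV t).E, 1 ≤ ∑ u ∈ e, y' u := by
    intro e he
    have : ∑ u ∈ e, y' u = ∑ u ∈ e, y u := by
      refine Finset.sum_congr rfl ?_
      intro u hu
      rw [hy'def]
      exact if_pos ((H.delV t).edge_subset e he hu)
    rw [this]
    exact hy.1 e he
  have hcov : H.IsECover y' := by
    intro e he
    have hne : (e.erase t).Nonempty := by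
      rw [Finset.nonempty_iff_ne_empty]
      intro h
      rcases (Finset.erase_eq_empty_iff e t).mp h with h1 | h1
      · exact absurd (h1 ▸ (H.edge_nonempty e he)) (by simp)
      · exact hs (h1 ▸ he)
    have he' : e.erase t ∈ (H.delV t).E := (H.mem_delV_E).mpr ⟨hne, e, he, rfl⟩
    calc (1 : ℕ) ≤ ∑ u ∈ e.erase t, y' u := hy'cov _ he'
      _ ≤ ∑ u ∈ e, y' u :=
        Finset.sum_le_sum_of_subset (Finset.erase_subset _ _)
  have hsum : ∑ u ∈ H.V, y' u = ∑ u ∈ (H.delV t).V, y u := by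
    have hsub : (H.delV t).V ⊆ H.V := by
      rw [H.delV_V]
      exact Finset.erase_subset _ _
    rw [← Finset.sum_subset hsub (fun u _ hu => by rw [hy'def]; exact if_neg hu)]
    refine Finset.sum_congr rfl ?_
    intro u hu
    rw [hy'def]
    exact if_pos hu
  have := H.tauE_le_cover hcov
  omega

/-- The König theorem of Berge and Las Vergnas for balanced hypergraphs. -/
lemma koenig_aux : ∀ (n : ℕ) (H : FinsetHypergraph α), (∑ e ∈ H.E, e.card) ≤ n →
    H.Balanced → H.tauE ≤ H.nuE := by
  intro n
  induction n with
  | zero =>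
    intro H hmu _
    have hE : H.E = ∅ := by
      by_contra hne
      obtain ⟨e, he⟩ := Finset.nonempty_iff_ne_empty.mpr hne
      have h1 : 1 ≤ e.card := (H.edge_nonempty e he).card_pos
      have h2 : e.card ≤ ∑ f ∈ H.E, f.card :=
        Finset.single_le_sum (fun f _ => Nat.zero_le _) he
      omega
    have hcov : H.IsECover (fun _ => 0) := by
      intro e he
      rw [hE] at he
      exact absurd he (Finset.notMem_empty e)
    have := H.tauE_le_cover hcov
    simp only [Finset.sum_const, smul_eq_mul, mul_zero] at this
    omega
  | succ n ih =>
    intro H hmu hbal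
    by_cases hE : H.E = ∅
    · have hcov : H.IsECover (fun _ => 0) := by
        intro e he
        rw [hE] at he
        exact absurd he (Finset.notMem_empty e)
      have := H.tauE_le_cover hcov
      simp only [Finset.sum_const, smul_eq_mul, mul_zero] at this
      omega
    · obtain ⟨e₀, he₀⟩ := Finset.nonempty_iff_ne_empty.mpr hE
      obtain ⟨t, ht₀⟩ := H.edge_nonempty e₀ he₀
      have htV : t ∈ H.V := H.edge_subset e₀ he₀ ht₀
      have hbal_avoid : (H.avoid t).Balanced := hbal.partial (H.avoid_E_subset t)
      have hmu_avoid : ∑ e ∈ (H.avoid t).E, e.card < ∑ e ∈ H.E, e.card := by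
        refine Finset.sum_lt_sum_of_subset (Finset.filter_subset _ _) he₀ ?_ ?_ ?_
        · simp [avoid, ht₀]
        · exact (H.edge_nonempty e₀ he₀).card_pos
        · intro f _ _
          exact Nat.zero_le _
      by_cases hsing : ({t} : Finset α) ∈ H.E
      · -- there is a singleton edge {t}
        have h1 : H.tauE ≤ (H.avoid t).tauE + 1 := H.tauE_le_avoid_succ htV
        have h2 : (H.avoid t).tauE ≤ (H.avoid t).nuE := ih (H.avoid t) (by omega) hbal_avoid
        have h3 : (H.avoid t).nuE + 1 ≤ H.nuE := by
          obtain ⟨N, hN, hNc⟩ := (H.avoid t).exists_max_matching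
          have hmem : ({t} : Finset α) ∉ N := by
            intro h
            exact (H.avoid_not_mem (hN.1.1 h)) (Finset.mem_singleton_self t)
          have hmatch : H.IsMatching (insert {t} N) := by
            constructor
            · exact Finset.insert_subset hsing (avoid_matching hN.1).1
            · intro e he f hf hef
              rcases Finset.mem_insert.mp he with rfl | he1 <;>
                rcases Finset.mem_insert.mp hf with rfl | hf1
              · exact absurd rfl hef
              · rw [Finset.disjoint_singleton_left]
                exact fun h => H.avoid_not_mem (hN.1.1 hf1) h
              · rw [Finset.disjoint_singleton_right]
                exact fun h => H.avoid_not_mem (hN.1.1 he1) h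
              · exact hN.1.2 e he1 f hf1 hef
          have := H.card_le_nuE hmatch
          rw [Finset.card_insert_of_notMem hmem] at this
          omega
        omega
      · -- no singleton edge at t
        have hmu_delV : ∑ e ∈ (H.delV t).E, e.card < ∑ e ∈ H.E, e.card := by
          have hstep1 : ∑ e ∈ (H.delV t).E, e.card ≤
              ∑ e ∈ H.E.image (fun e => e.erase t), e.card :=
            Finset.sum_le_sum_of_subset (Finset.filter_subset _ _)
          have hstep2 : ∑ e ∈ H.E.image (fun e => e.erase t), e.card ≤
              ∑ e ∈ H.E, (e.erase t).card := sum_image_le_nat _ _ _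
          have hstep3 : ∑ e ∈ H.E, (e.erase t).card < ∑ e ∈ H.E, e.card := by
            refine Finset.sum_lt_sum (fun e _ => Finset.card_le_card (Finset.erase_subset _ _))
              ⟨e₀, he₀, ?_⟩
            rw [Finset.card_erase_of_mem ht₀]
            have := Finset.card_pos.mpr (H.edge_nonempty e₀ he₀)
            omega
          omega
        rcases Nat.lt_or_ge H.nuE ((H.delV t).nuE) with hgt | hle
        · -- deleting t increases the matching number: find the star family S
          obtain ⟨N', hN', hN'c⟩ := (H.delV t).exists_max_matching
          have hN'card : H.nuE + 1 ≤ N'.card := by omega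
          obtain ⟨N, hNsub, hNcard⟩ := Finset.exists_subset_card_eq (s := N') (n := H.nuE + 1)
            (by omega)
          have hNmatch : (H.delV t).IsMatching N := matching_subset hN'.1 hNsub
          classical
          set lf : Finset α → Finset α := fun m =>
            if h : ∃ g, g ∈ H.E ∧ g.erase t = m then h.choose else ∅ with hlfdef
          have hlf : ∀ m ∈ N, lf m ∈ H.E ∧ (lf m).erase t = m := by
            intro m hm
            obtain ⟨hne, g, hg, hge⟩ := (H.mem_delV_E).mp (hNmatch.1 hm)
            have hex : ∃ g, g ∈ H.E ∧ g.erase t = m := ⟨g, hg, hge⟩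
            rw [hlfdef]
            simp only [dif_pos hex]
            exact hex.choose_spec
          have hinj : Set.InjOn lf N := by
            intro m₁ hm₁ m₂ hm₂ heq
            rw [← (hlf m₁ hm₁).2, ← (hlf m₂ hm₂).2, heq]
          set S := N.image lf with hSdef
          have hScard : S.card = H.nuE + 1 := by
            rw [hSdef, Finset.card_image_of_injOn hinj, hNcard]
          have hSE : S ⊆ H.E := by
            intro f hf
            obtain ⟨m, hm, rfl⟩ := Finset.mem_image.mp hf
            exact (hlf m hm).1
          have hSp : ∀ f ∈ S, ∀ g ∈ S, f ≠ g → f ∩ g ⊆ {t} := by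
            intro f hf g hg hfg u hu
            obtain ⟨m₁, hm₁, rfl⟩ := Finset.mem_image.mp hf
            obtain ⟨m₂, hm₂, rfl⟩ := Finset.mem_image.mp hg
            obtain ⟨hu1, hu2⟩ := Finset.mem_inter.mp hu
            rw [Finset.mem_singleton]
            by_contra hut
            have hm₁₂ : m₁ ≠ m₂ := fun h => hfg (h ▸ rfl)
            have hd := hNmatch.2 m₁ hm₁ m₂ hm₂ hm₁₂
            have hu1' : u ∈ m₁ := by
              rw [← (hlf m₁ hm₁).2]
              exact Finset.mem_erase.mpr ⟨hut, hu1⟩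
            have hu2' : u ∈ m₂ := by
              rw [← (hlf m₂ hm₂).2]
              exact Finset.mem_erase.mpr ⟨hut, hu2⟩
            exact Finset.disjoint_left.mp hd hu1' hu2'
          rcases Nat.lt_or_ge ((H.avoid t).nuE) H.nuE with hlt2 | hge2
          · -- the avoid-hypergraph has smaller matching number: conclude
            have h1 : H.tauE ≤ (H.avoid t).tauE + 1 := H.tauE_le_avoid_succ htV
            have h2 : (H.avoid t).tauE ≤ (H.avoid t).nuE := ih (H.avoid t) (by omega) hbal_avoid
            omega
          · -- contradiction via the augmentation lemma
            exfalso
            obtain ⟨Ma, hMa, hMac⟩ := (H.avoid t).exists_max_matching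
            have hMaH : H.IsMatching Ma := avoid_matching hMa.1
            have hvMa : ∀ m ∈ Ma, t ∉ m := fun m hm => H.avoid_not_mem (hMa.1.1 hm)
            have hMacard : Ma.card < S.card := by
              have := H.card_le_nuE hMaH
              omega
            obtain ⟨N₂, hN₂, hN₂c⟩ := star_lemma H hbal hMaH hvMa hSE hSp hMacard
            have := H.card_le_nuE hN₂
            omega
        · -- deleting t does not increase the matching number: conclude via H ∖ t
          have h1 : H.tauE ≤ (H.delV t).tauE := H.tauE_le_delV hsing
          have h2 : (H.delV t).tauE ≤ (H.delV t).nuE := ih (H.delV t) (by omega) (hbal.delV t)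
          omega

/-- König property of balanced hypergraphs. -/
theorem tauE_eq_nuE {H : FinsetHypergraph α} (hbal : H.Balanced) : H.tauE = H.nuE :=
  le_antisymm (koenig_aux _ H le_rfl hbal) H.nuE_le_tauE

end FinsetHypergraph
namespace FinsetHypergraph

variable {α : Type*} [DecidableEq α]

lemma nuE_delV_le_of_cover {H : FinsetHypergraph α} {v : α} {x : α → ℕ}
    (hx : H.IsECover x) (hxv : x v = 0) : (H.delV v).nuE ≤ ∑ u ∈ H.V, x u := by
  have hcov : (H.delV v).IsECover x := by
    intro e' he'
    obtain ⟨hne, e, he, rfl⟩ := (H.mem_delV_E).mp he'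
    by_cases hv : v ∈ e
    · have h1 : ∑ u ∈ e, x u = x v + ∑ u ∈ e.erase v, x u := (Finset.add_sum_erase e x hv).symm
      have h2 : 1 ≤ ∑ u ∈ e, x u := hx e he
      show 1 ≤ ∑ u ∈ e.erase v, x u
      omega
    · show 1 ≤ ∑ u ∈ e.erase v, x u
      rw [Finset.erase_eq_of_notMem hv]
      exact hx e he
  obtain ⟨N, hN, hNc⟩ := (H.delV v).exists_max_matching
  have h1 := (H.delV v).matching_card_le_cover hN.1 hcov
  have h2 : ∑ u ∈ (H.delV v).V, x u ≤ ∑ u ∈ H.V, x u := by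
    rw [H.delV_V]
    exact Finset.sum_le_sum_of_subset (Finset.erase_subset _ _)
  omega

lemma minECover_le_one {H : FinsetHypergraph α} {x : α → ℕ} {v : α}
    (hx : H.IsMinECover x) (hv : v ∈ H.V) : x v ≤ 1 := by
  classical
  by_contra h
  push_neg at h
  set y : α → ℕ := fun u => if u = v then x u - 1 else x u with hydef
  have hycov : H.IsECover y := by
    intro e he
    by_cases hve : v ∈ e
    · have h1 : 1 ≤ y v := by
        simp only [hydef, if_pos rfl]
        omega
      calc (1 : ℕ) ≤ y v := h1
        _ ≤ ∑ u ∈ e, y u := Finset.single_le_sum (fun u _ => Nat.zero_le _) hve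
    · have : ∑ u ∈ e, y u = ∑ u ∈ e, x u := by
        refine Finset.sum_congr rfl ?_
        intro u hu
        rw [hydef]
        exact if_neg (fun hh : u = v => hve (hh ▸ hu))
      rw [this]
      exact hx.1 e he
  have hsum : ∑ u ∈ H.V, y u < ∑ u ∈ H.V, x u := by
    rw [← Finset.add_sum_erase _ y hv, ← Finset.add_sum_erase _ x hv]
    have h1 : y v < x v := by
      simp only [hydef, if_pos rfl]
      omega
    have h2 : ∑ u ∈ H.V.erase v, y u = ∑ u ∈ H.V.erase v, x u := by
      refine Finset.sum_congr rfl ?_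
      intro u hu
      rw [hydef]
      exact if_neg (Finset.ne_of_mem_erase hu)
    omega
  have := hx.2 y hycov
  omega

lemma minECover_zero_outside {H : FinsetHypergraph α} (hbal : H.Balanced)
    {M : Finset (Finset α)} {x : α → ℕ} {v : α}
    (hM : H.IsMatching M) (hMc : M.card = H.nuE) (hx : H.IsMinECover x)
    (hv : v ∈ H.V) (hmiss : ∀ m ∈ M, v ∉ m) : x v = 0 := by
  set B := M.biUnion id with hBdef
  have hBV : B ⊆ H.V := by
    intro u hu
    obtain ⟨m, hm, hum⟩ := Finset.mem_biUnion.mp hu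
    exact H.edge_subset m (hM.1 hm) hum
  have h1 : M.card ≤ ∑ m ∈ M, ∑ u ∈ m, x u := by
    calc M.card = ∑ m ∈ M, 1 := by simp
      _ ≤ _ := Finset.sum_le_sum (fun m hm => hx.1 m (hM.1 hm))
  have h2 : ∑ m ∈ M, ∑ u ∈ m, x u = ∑ u ∈ B, x u :=
    (Finset.sum_biUnion (H.matching_pairwiseDisjoint hM)).symm
  have h3 : ∑ u ∈ H.V \ B, x u + ∑ u ∈ B, x u = ∑ u ∈ H.V, x u :=
    Finset.sum_sdiff hBV
  have h4 : ∑ u ∈ H.V, x u = H.nuE := by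
    rw [H.minECover_sum hx, tauE_eq_nuE hbal]
  have h5 : ∑ u ∈ H.V \ B, x u = 0 := by omega
  have hvB : v ∈ H.V \ B := by
    refine Finset.mem_sdiff.mpr ⟨hv, ?_⟩
    intro h
    obtain ⟨m, hm, hvm⟩ := Finset.mem_biUnion.mp h
    exact hmiss m hm hvm
  exact Finset.sum_eq_zero_iff.mp h5 v hvB

lemma miss_matching_delV {H : FinsetHypergraph α} {v : α} {M : Finset (Finset α)}
    (hM : H.IsMatching M) (hmiss : ∀ m ∈ M, v ∉ m) : (H.delV v).IsMatching M := by
  constructor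
  · intro m hm
    exact (H.mem_delV_E).mpr ⟨H.edge_nonempty m (hM.1 hm), m, hM.1 hm,
      Finset.erase_eq_of_notMem (hmiss m hm)⟩
  · exact hM.2

end FinsetHypergraph
/-- `⋎_E(H) = ⋎_E(H ∖ v)` for every `v ∈ F_H` and every `v ∈ N_H`. -/
theorem nuE_delV_of_mem_setF_setN {α : Type*} [DecidableEq α] (H : FinsetHypergraph α)
    (hH : H.Balanced) :
    (∀ v ∈ H.setF, H.nuE = (H.delV v).nuE) ∧ (∀ v ∈ H.setN, H.nuE = (H.delV v).nuE) := by
  classical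
  constructor
  · -- vertices missed by some maximum matching
    rintro v ⟨hvV, M, hM, hMmiss⟩
    have hMc : M.card = H.nuE := H.maxEMatching_card hM
    -- `≤` : the matching `M` survives in `H ∖ v`
    have hge : H.nuE ≤ (H.delV v).nuE := by
      rw [← hMc]
      exact (H.delV v).card_le_nuE (FinsetHypergraph.miss_matching_delV hM.1 hMmiss)
    -- `≥` : via a minimum cover which is zero at `v`
    obtain ⟨x, hx, hxsum⟩ := H.exists_min_cover
    have hxv : x v = 0 :=
      FinsetHypergraph.minECover_zero_outside hH hM.1 hMc hx hvV hMmiss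
    have hle := FinsetHypergraph.nuE_delV_le_of_cover hx.1 hxv
    rw [hxsum, FinsetHypergraph.tauE_eq_nuE hH] at hle
    omega
  · -- vertices in `N_H`
    rintro v ⟨hvV, hvQ, hvF⟩
    -- from `v ∉ Q_H` extract a minimum cover with `x v = 0`
    have hxex : ∃ x, H.IsMinECover x ∧ x v ≠ 1 := by
      by_contra hno
      push_neg at hno
      exact hvQ ⟨hvV, fun x hx => hno x hx⟩
    obtain ⟨x, hx, hxne⟩ := hxex
    have hxle := FinsetHypergraph.minECover_le_one hx hvV
    have hxv : x v = 0 := by omega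
    have hsingleton : ({v} : Finset α) ∉ H.E := by
      intro h
      have h1 : 1 ≤ ∑ u ∈ ({v} : Finset α), x u := hx.1 {v} h
      rw [Finset.sum_singleton, hxv] at h1
      omega
    -- `≥` : the deleted hypergraph has no larger matching number
    have hle := FinsetHypergraph.nuE_delV_le_of_cover hx.1 hxv
    rw [H.minECover_sum hx, FinsetHypergraph.tauE_eq_nuE hH] at hle
    -- `≤` : every maximum matching covers `v`; modify one
    obtain ⟨M, hM, hMc⟩ := H.exists_max_matching
    have hcov : ∃ m ∈ M, v ∈ m := by
      by_contra hno
      push_neg at hno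
      exact hvF ⟨hvV, M, hM, hno⟩
    obtain ⟨m, hmM, hvm⟩ := hcov
    have hmE : m ∈ H.E := hM.1.1 hmM
    have hmne : (m.erase v).Nonempty := by
      rw [Finset.nonempty_iff_ne_empty]
      intro h
      rcases (Finset.erase_eq_empty_iff m v).mp h with h1 | h1
      · exact absurd (h1 ▸ H.edge_nonempty m hmE) (by simp)
      · exact hsingleton (h1 ▸ hmE)
    have hmdel : m.erase v ∈ (H.delV v).E :=
      (H.mem_delV_E).mpr ⟨hmne, m, hmE, rfl⟩
    have hnotmem : m.erase v ∉ M.erase m := by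
      intro h
      have h1 : m.erase v ∈ M := Finset.mem_of_mem_erase h
      have h2 : m.erase v ≠ m := by
        intro hh
        apply Finset.notMem_erase v m
        rw [hh]
        exact hvm
      have hd := hM.1.2 _ h1 _ hmM h2
      obtain ⟨u, hu⟩ := hmne
      exact Finset.disjoint_left.mp hd hu (Finset.mem_of_mem_erase hu)
    have hrest : ∀ f ∈ M.erase m, v ∉ f ∧ f ∈ (H.delV v).E := by
      intro f hf
      have hfM := Finset.mem_of_mem_erase hf
      have hfm : f ≠ m := Finset.ne_of_mem_erase hf
      have hd := hM.1.2 f hfM m hmM hfm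
      have hvf : v ∉ f := fun h => Finset.disjoint_left.mp hd h hvm
      exact ⟨hvf, (H.mem_delV_E).mpr ⟨H.edge_nonempty f (hM.1.1 hfM), f, hM.1.1 hfM,
        Finset.erase_eq_of_notMem hvf⟩⟩
    have hNmatch : (H.delV v).IsMatching (insert (m.erase v) (M.erase m)) := by
      constructor
      · intro f hf
        rcases Finset.mem_insert.mp hf with rfl | hf1
        · exact hmdel
        · exact (hrest f hf1).2
      · intro e he f hf hef
        rcases Finset.mem_insert.mp he with rfl | he1 <;>
          rcases Finset.mem_insert.mp hf with rfl | hf1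
        · exact absurd rfl hef
        · have hd := hM.1.2 m hmM f (Finset.mem_of_mem_erase hf1)
            (Ne.symm (Finset.ne_of_mem_erase hf1))
          exact Finset.disjoint_of_subset_left (Finset.erase_subset _ _) hd
        · have hd := hM.1.2 e (Finset.mem_of_mem_erase he1) m hmM (Finset.ne_of_mem_erase he1)
          exact Finset.disjoint_of_subset_right (Finset.erase_subset _ _) hd
        · exact hM.1.2 e (Finset.mem_of_mem_erase he1) f (Finset.mem_of_mem_erase hf1) hef
    have hNcard : (insert (m.erase v) (M.erase m)).card = M.card := by
      rw [Finset.card_insert_of_notMem hnotmem, Finset.card_erase_of_mem hmM]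
      have hpos : 1 ≤ M.card := Finset.card_pos.mpr ⟨m, hmM⟩
      omega
    have hge : H.nuE ≤ (H.delV v).nuE := by
      have h1 := (H.delV v).card_le_nuE hNmatch
      rw [hNcard, hMc] at h1
      exact h1
    omega
end
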